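/- arXiv:2302.01213 — 4 statements merged into one kernel-verified Lean document; each statement's English description precedes it below -/
import Mathlib

section
/- Let n ≥ 3 and let C = [0,1]ⁿ ⊂ ℝⁿ be the unit cube. Then there exist convex bodies A, B ⊂ ℝⁿ such that F_C(A,B) < 0 (equivalently, the Bezout constant b₂(C) > 1). -/
open MeasureTheory
open scoped Pointwise

noncomputable section

/-- A convex body in ℝⁿ: a compact convex set with nonempty interior. -/
def IsConvexBody {n : ℕ} (K : Set (EuclideanSpace ℝ (Fin n))) : Prop :=
  Convex ℝ K ∧ IsCompact K ∧ (interior K).Nonempty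

/-- The mixed volume of an `n`-tuple of compact convex sets in ℝⁿ, defined via the
alternating-sum formula
`V(K₁,…,Kₙ) = (1/n!) ∑_{J ⊆ [n]} (−1)^{n−|J|} vol(∑_{i∈J} Kᵢ)`,
where the sum of sets is Minkowski sum (the empty Minkowski sum has volume `0`). -/
noncomputable def mixedVol (n : ℕ) (K : Fin n → Set (EuclideanSpace ℝ (Fin n))) : ℝ :=
  (1 / (n.factorial : ℝ)) *
    ∑ J : Finset (Fin n), (-1 : ℝ) ^ (n - J.card) *
      (MeasureTheory.volume (∑ i ∈ J, K i)).toReal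

/-- The Bezout form `F_K(A,B) = V(A,K[n−1]) V(B,K[n−1]) − V(A,B,K[n−2]) vol(K)`. -/
noncomputable def bezoutForm (n : ℕ) (K A B : Set (EuclideanSpace ℝ (Fin n))) : ℝ :=
  mixedVol n (fun i => if (i : ℕ) = 0 then A else K) *
    mixedVol n (fun i => if (i : ℕ) = 0 then B else K) -
  mixedVol n (fun i => if (i : ℕ) = 0 then A else if (i : ℕ) = 1 then B else K) *
    (MeasureTheory.volume K).toReal

/-- The support function `h_K(u) = sup_{y ∈ K} ⟨y,u⟩`. -/
noncomputable def suppFun {n : ℕ} (K : Set (EuclideanSpace ℝ (Fin n)))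
    (u : EuclideanSpace ℝ (Fin n)) : ℝ :=
  sSup ((fun y => (inner ℝ y u : ℝ)) '' K)

/-- The face `K^u = {y ∈ K : ⟨y,u⟩ = h_K(u)}` of `K` in direction `u`. -/
def face {n : ℕ} (K : Set (EuclideanSpace ℝ (Fin n))) (u : EuclideanSpace ℝ (Fin n)) :
    Set (EuclideanSpace ℝ (Fin n)) :=
  {y ∈ K | (inner ℝ y u : ℝ) = suppFun K u}

/-- The (affine) dimension of a set: the rank of its vector span. -/
noncomputable def setDim {n : ℕ} (C : Set (EuclideanSpace ℝ (Fin n))) : ℕ :=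
  Module.finrank ℝ (vectorSpan ℝ C)

/-- The isoperimetric ratio `Isop(C) = ℋ^{k−1}(relbd C) / (k ℋ^k(C))` of a `k`-dimensional
compact convex set, where `relbd` is the relative (intrinsic) boundary. -/
noncomputable def isop {n : ℕ} (C : Set (EuclideanSpace ℝ (Fin n))) : ℝ :=
  (μH[(setDim C : ℝ) - 1] (intrinsicFrontier ℝ C)).toReal /
    ((setDim C : ℝ) * (μH[(setDim C : ℝ)] C).toReal)

/-- `F` is a facet of `K`: a face of `K` in some unit direction, of dimension `n − 1`. -/
def IsFacet {n : ℕ} (K F : Set (EuclideanSpace ℝ (Fin n))) : Prop :=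
  ∃ u : EuclideanSpace ℝ (Fin n), ‖u‖ = 1 ∧ F = face K u ∧ setDim F = n - 1

/-- `κ_d`, the volume of the `d`-dimensional Euclidean unit ball. -/
noncomputable def ballVol (d : ℕ) : ℝ :=
  (MeasureTheory.volume (Metric.closedBall (0 : EuclideanSpace ℝ (Fin d)) 1)).toReal

/-- The Wulff shape `W(Ω,g) = ⋂_{u ∈ Ω} {x : ⟨x,u⟩ ≤ g(u)}`. -/
def wulff {n : ℕ} (Ω : Set (EuclideanSpace ℝ (Fin n)))
    (g : EuclideanSpace ℝ (Fin n) → ℝ) : Set (EuclideanSpace ℝ (Fin n)) :=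
  {x | ∀ u ∈ Ω, (inner ℝ x u : ℝ) ≤ g u}

/-! ### Auxiliary machinery: boxes, their volumes, Minkowski sums, and permanents -/

/-- The axis-parallel box `∏ⱼ [0, cⱼ]` as a subset of `EuclideanSpace ℝ (Fin n)`. -/
def box {n : ℕ} (c : Fin n → ℝ) : Set (EuclideanSpace ℝ (Fin n)) :=
  {x | ∀ j, x j ∈ Set.Icc 0 (c j)}

lemma box_add_box {n : ℕ} {c d : Fin n → ℝ} (hc : ∀ j, 0 ≤ c j) (hd : ∀ j, 0 ≤ d j) :
    box c + box d = box (c + d) := by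
  ext x
  constructor
  · rintro ⟨y, hy, z, hz, rfl⟩ j
    have h1 := hy j; have h2 := hz j
    simp only [Set.mem_Icc] at h1 h2 ⊢
    refine ⟨by simpa using add_nonneg h1.1 h2.1, by simpa using add_le_add h1.2 h2.2⟩
  · intro hx
    refine ⟨WithLp.toLp 2 (fun j => min (x j) (c j) : Fin n → ℝ),
      fun j => ?_, WithLp.toLp 2 (fun j => x j - min (x j) (c j) : Fin n → ℝ), fun j => ?_, by
        ext j; simp⟩
    · exact Set.mem_Icc.2 ⟨le_min (hx j).1 (hc j), min_le_right _ _⟩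
    · have h2 := (hx j).2; simp only [Pi.add_apply] at h2
      rcases le_total (x j) (c j) with h | h
      · simp [min_eq_left h, hd j]
      · simp only [min_eq_right h, Set.mem_Icc]
        constructor <;> linarith [(hx j).1]

lemma sum_box {n : ℕ} (s : Fin n → Fin n → ℝ) (hs : ∀ i j, 0 ≤ s i j)
    {J : Finset (Fin n)} (hJ : J.Nonempty) :
    ∑ i ∈ J, box (s i) = box (fun j => ∑ i ∈ J, s i j) := by
  induction hJ using Finset.Nonempty.cons_induction with
  | singleton a => simp
  | cons a J ha hJ ih =>
    rw [Finset.sum_cons, ih, box_add_box (hs a) (fun j => Finset.sum_nonneg fun i _ => hs i j)]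
    have : (s a + fun j => ∑ i ∈ J, s i j) = fun j => ∑ i ∈ Finset.cons a J ha, s i j := by
      funext j; simp [Finset.sum_insert ha]
    rw [this]

lemma volume_box {n : ℕ} (c : Fin n → ℝ) :
    volume (box c) = ∏ j, ENNReal.ofReal (c j) := by
  have key : box c = ((MeasurableEquiv.toLp 2 (Fin n → ℝ)).symm) ⁻¹'
      (Set.univ.pi fun j => Set.Icc 0 (c j)) := by
    ext x
    simp only [box, Set.mem_preimage, Set.mem_univ_pi, Set.mem_Icc, Set.mem_setOf_eq]
    rfl
  rw [key, (EuclideanSpace.volume_preserving_symm_measurableEquiv_toLp (Fin n)).measure_preimage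
    ((MeasurableSet.univ_pi (fun j => measurableSet_Icc)).nullMeasurableSet)]
  rw [volume_pi_pi]
  simp [Real.volume_Icc]

lemma neg_one_pow_nat_sub {n k : ℕ} (h : k ≤ n) : (-1:ℝ)^(n-k) = (-1)^n * (-1)^k := by
  have h1 : ((-1:ℝ))^(n-k) * (-1)^k = (-1)^n := by rw [← pow_add, Nat.sub_add_cancel h]
  have h2 : ((-1:ℝ))^k * (-1)^k = 1 := by rw [← mul_pow]; norm_num
  calc (-1:ℝ)^(n-k) = (-1)^(n-k) * ((-1)^k * (-1)^k) := by rw [h2, mul_one]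
  _ = (-1)^n * (-1)^k := by rw [← mul_assoc, h1]

lemma sum_powerset_neg_one_pow_card_real {α : Type*} [DecidableEq α] (x : Finset α) :
    (∑ m ∈ x.powerset, (-1 : ℝ) ^ m.card) = if x = ∅ then 1 else 0 := by
  have := Finset.sum_powerset_neg_one_pow_card (x := x)
  exact_mod_cast congrArg (Int.cast : ℤ → ℝ) this

open Classical in
lemma incl_excl {n : ℕ} (f : Fin n → Fin n) :
    ∑ J : Finset (Fin n), (if (∀ j, f j ∈ J) then (-1:ℝ)^(n - J.card) else 0) =
    if Function.Bijective f then 1 else 0 := by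
  set R : Finset (Fin n) := Finset.image f Finset.univ with hR
  have hcond : ∀ J : Finset (Fin n), (∀ j, f j ∈ J) ↔ R ⊆ J := by
    intro J
    constructor
    · intro h x hx
      obtain ⟨j, _, rfl⟩ := Finset.mem_image.1 hx
      exact h j
    · intro h j
      exact h (Finset.mem_image.2 ⟨j, Finset.mem_univ j, rfl⟩)
  simp only [hcond]
  rw [← Finset.sum_filter]
  have hbij : Function.Bijective f ↔ R = Finset.univ := by
    rw [Finite.surjective_iff_bijective (f := f) |>.symm]
    constructor
    · intro h
      exact Finset.eq_univ_iff_forall.2 fun x => Finset.mem_image.2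
        (let ⟨j, hj⟩ := h x; ⟨j, Finset.mem_univ j, hj⟩)
    · intro h x
      have : x ∈ R := h ▸ Finset.mem_univ x
      obtain ⟨j, _, hj⟩ := Finset.mem_image.1 this
      exact ⟨j, hj⟩
  have key : ∑ J ∈ Finset.univ.filter (fun J => R ⊆ J), (-1:ℝ)^(n - J.card) =
      ∑ T ∈ Rᶜ.powerset, (-1:ℝ)^(n - (R.card + T.card)) := by
    refine Finset.sum_nbij' (fun J => J \ R) (fun T => R ∪ T) ?_ ?_ ?_ ?_ ?_
    · intro J hJ
      simp only [Finset.mem_filter] at hJ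
      refine Finset.mem_powerset.2 fun x hx => ?_
      rw [Finset.mem_sdiff] at hx
      simpa [Finset.mem_compl] using hx.2
    · intro T hT
      simp only [Finset.mem_filter]
      exact ⟨Finset.mem_univ _, Finset.subset_union_left⟩
    · intro J hJ
      simp only [Finset.mem_filter] at hJ
      exact Finset.union_sdiff_of_subset hJ.2
    · intro T hT
      have : Disjoint R T := Finset.disjoint_left.2 fun x hx hxT =>
        (Finset.mem_compl.1 (Finset.mem_powerset.1 hT hxT)) hx
      exact Finset.union_sdiff_cancel_left this
    · intro J hJ
      simp only [Finset.mem_filter] at hJ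
      congr 1
      rw [Finset.card_sdiff_of_subset hJ.2, Nat.add_sub_cancel' (Finset.card_le_card hJ.2)]
  rw [key]
  have hRn : R.card ≤ n := by
    simpa using Finset.card_le_card (Finset.subset_univ R)
  have : ∀ T ∈ Rᶜ.powerset, (-1:ℝ)^(n - (R.card + T.card)) =
      ((-1:ℝ)^n * (-1)^R.card) * (-1)^T.card := by
    intro T hT
    have h1 : R.card + T.card ≤ n := by
      have := Finset.card_le_card (Finset.mem_powerset.1 hT)
      have h2 : Rᶜ.card = n - R.card := by simp [Finset.card_compl]
      omega
    rw [neg_one_pow_nat_sub h1, pow_add, mul_assoc]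
  rw [Finset.sum_congr rfl this, ← Finset.mul_sum, sum_powerset_neg_one_pow_card_real]
  by_cases hb : Function.Bijective f
  · rw [if_pos hb]
    have hRu : R = Finset.univ := hbij.1 hb
    have : Rᶜ = ∅ := by simp [hRu]
    rw [if_pos this, hRu]
    simp only [Finset.card_univ, Fintype.card_fin, mul_one, ← pow_add]
    simp [pow_add, ← mul_pow]
  · rw [if_neg hb]
    have : Rᶜ ≠ ∅ := by
      intro h
      exact hb (hbij.2 (by simpa [Finset.compl_eq_empty_iff] using h))
    rw [if_neg this, mul_zero]

open Classical in
lemma bij_sum_to_perm {n : ℕ} (P : (Fin n → Fin n) → ℝ) :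
    ∑ f : Fin n → Fin n, (if Function.Bijective f then P f else 0) =
    ∑ σ : Equiv.Perm (Fin n), P σ := by
  rw [← Finset.sum_filter]
  have himg : Finset.univ.filter (fun f : Fin n → Fin n => Function.Bijective f) =
      Finset.image (fun σ : Equiv.Perm (Fin n) => ⇑σ) Finset.univ := by
    ext f
    simp only [Finset.mem_filter, Finset.mem_univ, true_and, Finset.mem_image]
    constructor
    · intro h
      exact ⟨Equiv.ofBijective f h, rfl⟩
    · rintro ⟨σ, rfl⟩
      exact σ.bijective
  rw [himg, Finset.sum_image (fun x _ y _ h => Equiv.coe_fn_injective h)]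

open Classical in
lemma perm_sum {n : ℕ} (s : Fin n → Fin n → ℝ) :
    ∑ J : Finset (Fin n), (-1 : ℝ) ^ (n - J.card) * ∏ j, (∑ i ∈ J, s i j) =
    ∑ σ : Equiv.Perm (Fin n), ∏ j, s (σ j) j := by
  have step1 : ∀ J : Finset (Fin n), ∏ j, (∑ i ∈ J, s i j) =
      ∑ f : Fin n → Fin n, (if (∀ j, f j ∈ J) then ∏ j, s (f j) j else 0) := by
    intro J
    rw [Finset.prod_univ_sum (fun _ => J) (fun j i => s i j)]
    rw [← Finset.sum_filter]
    apply Finset.sum_congr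
    · ext f
      simp [Fintype.mem_piFinset]
    · intros; rfl
  calc ∑ J : Finset (Fin n), (-1 : ℝ) ^ (n - J.card) * ∏ j, (∑ i ∈ J, s i j)
      = ∑ J : Finset (Fin n), ∑ f : Fin n → Fin n,
          (if (∀ j, f j ∈ J) then (-1 : ℝ) ^ (n - J.card) else 0) * ∏ j, s (f j) j := by
        refine Finset.sum_congr rfl fun J _ => ?_
        rw [step1, Finset.mul_sum]
        refine Finset.sum_congr rfl fun f _ => ?_
        split_ifs <;> ring
    _ = ∑ f : Fin n → Fin n, (∑ J : Finset (Fin n),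
          (if (∀ j, f j ∈ J) then (-1 : ℝ) ^ (n - J.card) else 0)) * ∏ j, s (f j) j := by
        rw [Finset.sum_comm]
        refine Finset.sum_congr rfl fun f _ => ?_
        rw [Finset.sum_mul]
    _ = ∑ f : Fin n → Fin n, (if Function.Bijective f then ∏ j, s (f j) j else 0) := by
        refine Finset.sum_congr rfl fun f _ => ?_
        rw [incl_excl f]
        split_ifs <;> ring
    _ = ∑ σ : Equiv.Perm (Fin n), ∏ j, s (σ j) j := bij_sum_to_perm _

lemma empty_sum_vol {n : ℕ} (hn : 0 < n) (K : Fin n → Set (EuclideanSpace ℝ (Fin n))) :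
    (MeasureTheory.volume (∑ i ∈ (∅ : Finset (Fin n)), K i)).toReal = 0 := by
  rw [Finset.sum_empty]
  have hbox : (0 : Set (EuclideanSpace ℝ (Fin n))) = box (fun _ => 0) := by
    ext x
    simp only [Set.mem_zero, box, Set.mem_setOf_eq, Set.mem_Icc]
    constructor
    · rintro rfl j
      constructor <;> simp
    · intro h
      ext j
      exact le_antisymm (h j).2 (h j).1
  rw [hbox, volume_box]
  have : Nonempty (Fin n) := ⟨⟨0, hn⟩⟩
  simp [hn.ne']

lemma vol_sum_box {n : ℕ} (hn : 0 < n) (s : Fin n → Fin n → ℝ) (hs : ∀ i j, 0 ≤ s i j)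
    (J : Finset (Fin n)) :
    (MeasureTheory.volume (∑ i ∈ J, box (s i))).toReal = ∏ j, (∑ i ∈ J, s i j) := by
  rcases J.eq_empty_or_nonempty with rfl | hJ
  · rw [empty_sum_vol hn]
    have : Nonempty (Fin n) := ⟨⟨0, hn⟩⟩
    simp [(zero_pow hn.ne' : (0:ℝ)^n = 0)]
  · rw [sum_box s hs hJ, volume_box, ENNReal.toReal_prod]
    exact Finset.prod_congr rfl fun j _ =>
      ENNReal.toReal_ofReal (Finset.sum_nonneg fun i _ => hs i j)

lemma mixedVol_box {n : ℕ} (hn : 0 < n) (s : Fin n → Fin n → ℝ) (hs : ∀ i j, 0 ≤ s i j) :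
    mixedVol n (fun i => box (s i)) =
      (1 / (n.factorial : ℝ)) * ∑ σ : Equiv.Perm (Fin n), ∏ j, s (σ j) j := by
  unfold mixedVol
  congr 1
  rw [← perm_sum s]
  exact Finset.sum_congr rfl fun J _ => by rw [vol_sum_box hn s hs J]

/-! ### Permutation counting lemmas -/

lemma sum_perm_one (k : ℕ) : ∑ _σ : Equiv.Perm (Fin k), (1:ℝ) = k.factorial := by
  simp [Finset.card_univ, Fintype.card_perm]

lemma ind0 (k : ℕ) : ∑ σ : Equiv.Perm (Fin (k+1)), (if σ 0 = 0 then (1:ℝ) else 0)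
    = k.factorial := by
  rw [← Equiv.sum_comp (Equiv.Perm.decomposeFin.symm)
    (fun σ : Equiv.Perm (Fin (k+1)) => if σ 0 = 0 then (1:ℝ) else 0)]
  rw [Fintype.sum_prod_type]
  simp [Finset.card_univ, Fintype.card_perm]

/-- Conjugation by the transposition `(0 1)` as a self-equivalence of the permutation group. -/
def conjSwap (k : ℕ) : Equiv.Perm (Fin (k+2)) ≃ Equiv.Perm (Fin (k+2)) where
  toFun σ := Equiv.swap 0 1 * σ * Equiv.swap 0 1
  invFun σ := Equiv.swap 0 1 * σ * Equiv.swap 0 1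
  left_inv σ := by
    ext x
    simp [Equiv.Perm.mul_apply, Equiv.swap_apply_self]
  right_inv σ := by
    ext x
    simp [Equiv.Perm.mul_apply, Equiv.swap_apply_self]

/-- Left multiplication by the transposition `(0 1)` as a self-equivalence. -/
def lmulSwap (k : ℕ) : Equiv.Perm (Fin (k+2)) ≃ Equiv.Perm (Fin (k+2)) where
  toFun σ := Equiv.swap 0 1 * σ
  invFun σ := Equiv.swap 0 1 * σ
  left_inv σ := by
    ext x
    simp [Equiv.Perm.mul_apply, Equiv.swap_apply_self]
  right_inv σ := by
    ext x
    simp [Equiv.Perm.mul_apply, Equiv.swap_apply_self]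

lemma ind1 (k : ℕ) : ∑ σ : Equiv.Perm (Fin (k+2)), (if σ 1 = 1 then (1:ℝ) else 0)
    = (k+1).factorial := by
  rw [← Equiv.sum_comp (conjSwap k)
    (fun σ : Equiv.Perm (Fin (k+2)) => if σ 1 = 1 then (1:ℝ) else 0)]
  rw [← ind0 (k+1)]
  refine Finset.sum_congr rfl fun σ _ => ?_
  have happ : (conjSwap k σ) 1 = Equiv.swap (0:Fin (k+2)) 1 (σ 0) := by
    simp [conjSwap, Equiv.Perm.mul_apply, Equiv.swap_apply_right]
  rw [happ]
  congr 1
  rw [eq_iff_iff]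
  constructor
  · intro h
    have := (Equiv.apply_eq_iff_eq_symm_apply _).1 h
    simpa [Equiv.symm_swap, Equiv.swap_apply_right] using this
  · intro h
    rw [h]
    exact Equiv.swap_apply_left 0 1

lemma ind10 (k : ℕ) : ∑ σ : Equiv.Perm (Fin (k+2)), (if σ 1 = 0 then (1:ℝ) else 0)
    = (k+1).factorial := by
  rw [← Equiv.sum_comp (lmulSwap k)
    (fun σ : Equiv.Perm (Fin (k+2)) => if σ 1 = 0 then (1:ℝ) else 0)]
  rw [← ind1 k]
  refine Finset.sum_congr rfl fun σ _ => ?_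
  have happ : (lmulSwap k σ) 1 = Equiv.swap (0:Fin (k+2)) 1 (σ 1) := by
    simp [lmulSwap, Equiv.Perm.mul_apply]
  rw [happ]
  congr 1
  rw [eq_iff_iff]
  constructor
  · intro h
    have := (Equiv.apply_eq_iff_eq_symm_apply _).1 h
    simpa [Equiv.symm_swap, Equiv.swap_apply_left] using this
  · intro h
    rw [h]
    exact Equiv.swap_apply_right 0 1

lemma ind01 (k : ℕ) : ∑ σ : Equiv.Perm (Fin (k+2)),
    (if σ 0 = 0 ∧ σ 1 = 1 then (1:ℝ) else 0) = k.factorial := by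
  rw [← Equiv.sum_comp (Equiv.Perm.decomposeFin.symm)
    (fun σ : Equiv.Perm (Fin (k+2)) => if σ 0 = 0 ∧ σ 1 = 1 then (1:ℝ) else 0)]
  rw [Fintype.sum_prod_type]
  have key : ∀ (p : Fin (k+2)) (e : Equiv.Perm (Fin (k+1))),
      (if (Equiv.Perm.decomposeFin.symm (p, e)) 0 = 0 ∧
          (Equiv.Perm.decomposeFin.symm (p, e)) 1 = 1 then (1:ℝ) else 0) =
      (if p = 0 then 1 else 0) * (if e 0 = 0 then 1 else 0) := by
    intro p e
    by_cases hp : p = 0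
    · subst hp
      simp only [Equiv.Perm.decomposeFin_symm_apply_zero,
        Equiv.Perm.decomposeFin_symm_apply_one, if_pos rfl, true_and]
      rw [Equiv.swap_self]
      simp only [Equiv.refl_apply, if_true, one_mul]
      rw [show ((1:Fin (k+2))) = (0:Fin (k+1)).succ from (Fin.succ_zero_eq_one).symm]
      simp only [Fin.succ_inj]
    · simp [Equiv.Perm.decomposeFin_symm_apply_zero, hp]
  simp only [key]
  rw [← Finset.sum_mul_sum, ind0 k]
  simp

end

noncomputable section
/-! ### The specific bodies and matrices -/

/-- Matrix of side lengths for `V(A, C[n-1])`. -/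
def sA (m : ℕ) : Fin (m+3) → Fin (m+3) → ℝ :=
  fun i j => if (i:ℕ) = 0 ∧ (j:ℕ) = 0 then 2 else 1
/-- Matrix of side lengths for `V(B, C[n-1])`. -/
def sB (m : ℕ) : Fin (m+3) → Fin (m+3) → ℝ :=
  fun i j => if (i:ℕ) = 0 ∧ (j:ℕ) = 1 then 2 else 1
/-- Matrix of side lengths for `V(A, B, C[n-2])`. -/
def sAB (m : ℕ) : Fin (m+3) → Fin (m+3) → ℝ :=
  fun i j => if (i:ℕ) = 0 ∧ (j:ℕ) = 0 then 2
    else if (i:ℕ) = 1 ∧ (j:ℕ) = 1 then 2 else 1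

lemma val01 (m : ℕ) : ((0 : Fin (m+3)) : ℕ) = 0 ∧ ((1 : Fin (m+3)) : ℕ) = 1 := by
  constructor
  · rfl
  · simp [Fin.val_one]

lemma prodA {m : ℕ} (σ : Equiv.Perm (Fin (m+3))) :
    ∏ j, sA m (σ j) j = if σ 0 = 0 then 2 else 1 := by
  rw [Finset.prod_eq_single (0 : Fin (m+3))]
  · simp [sA, Fin.ext_iff, -Fin.val_eq_zero_iff]
  · intro b _ hb
    have hb' : (b : ℕ) ≠ 0 := by simpa [Fin.ext_iff, -Fin.val_eq_zero_iff] using hb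
    simp [sA, hb']
  · intro h; exact absurd (Finset.mem_univ _) h

lemma prodB {m : ℕ} (σ : Equiv.Perm (Fin (m+3))) :
    ∏ j, sB m (σ j) j = if σ 1 = 0 then 2 else 1 := by
  rw [Finset.prod_eq_single (1 : Fin (m+3))]
  · simp [sB, Fin.ext_iff, (val01 m).2, -Fin.val_eq_zero_iff]
  · intro b _ hb
    have hb' : (b : ℕ) ≠ 1 := by
      intro h
      exact hb (by rw [Fin.ext_iff, h, (val01 m).2])
    simp [sB, hb']
  · intro h; exact absurd (Finset.mem_univ _) h

lemma prodAB {m : ℕ} (σ : Equiv.Perm (Fin (m+3))) :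
    ∏ j, sAB m (σ j) j =
      (if σ 0 = 0 then 2 else 1) * (if σ 1 = 1 then 2 else 1) := by
  have h01 : (0 : Fin (m+3)) ≠ 1 := by
    rw [Ne, Fin.ext_iff, (val01 m).1, (val01 m).2]; omega
  rw [← Finset.prod_subset (Finset.subset_univ ({0, 1} : Finset (Fin (m+3))))]
  · rw [Finset.prod_pair h01]
    congr 1
    · simp [sAB, Fin.ext_iff, (val01 m).1, -Fin.val_eq_zero_iff]
    · have : ((1 : Fin (m+3)) : ℕ) ≠ 0 := by rw [(val01 m).2]; omega
      simp [sAB, Fin.ext_iff, (val01 m).2, this, -Fin.val_eq_zero_iff]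
  · intro x _ hx
    simp only [Finset.mem_insert, Finset.mem_singleton, not_or] at hx
    have h0 : (x : ℕ) ≠ 0 := by simpa [Fin.ext_iff, -Fin.val_eq_zero_iff] using hx.1
    have h1 : (x : ℕ) ≠ 1 := by
      intro h
      exact hx.2 (by rw [Fin.ext_iff, h, (val01 m).2])
    simp [sAB, h0, h1]

lemma ite_two_one (P : Prop) [Decidable P] :
    (if P then (2:ℝ) else 1) = 1 + (if P then 1 else 0) := by
  split_ifs <;> norm_num

lemma SA_val (m : ℕ) : ∑ σ : Equiv.Perm (Fin (m+3)), ∏ j, sA m (σ j) j =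
    ((m+3).factorial : ℝ) + ((m+2).factorial : ℝ) := by
  have h1 : ∀ σ : Equiv.Perm (Fin (m+3)), ∏ j, sA m (σ j) j =
      1 + (if σ 0 = 0 then (1:ℝ) else 0) := fun σ => by
    rw [prodA σ, ite_two_one]
  rw [Finset.sum_congr rfl fun σ _ => h1 σ, Finset.sum_add_distrib]
  rw [sum_perm_one (m+3)]
  congr 1
  exact ind0 (m+2)

lemma SB_val (m : ℕ) : ∑ σ : Equiv.Perm (Fin (m+3)), ∏ j, sB m (σ j) j =
    ((m+3).factorial : ℝ) + ((m+2).factorial : ℝ) := by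
  have h1 : ∀ σ : Equiv.Perm (Fin (m+3)), ∏ j, sB m (σ j) j =
      1 + (if σ 1 = 0 then (1:ℝ) else 0) := fun σ => by
    rw [prodB σ, ite_two_one]
  rw [Finset.sum_congr rfl fun σ _ => h1 σ, Finset.sum_add_distrib]
  rw [sum_perm_one (m+3)]
  congr 1
  exact ind10 (m+1)

lemma SAB_val (m : ℕ) : ∑ σ : Equiv.Perm (Fin (m+3)), ∏ j, sAB m (σ j) j =
    ((m+3).factorial : ℝ) + 2 * ((m+2).factorial : ℝ) + ((m+1).factorial : ℝ) := by
  have h1 : ∀ σ : Equiv.Perm (Fin (m+3)), ∏ j, sAB m (σ j) j =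
      1 + (if σ 0 = 0 then (1:ℝ) else 0) + (if σ 1 = 1 then (1:ℝ) else 0)
        + (if σ 0 = 0 ∧ σ 1 = 1 then (1:ℝ) else 0) := fun σ => by
    rw [prodAB σ]
    by_cases h0 : σ 0 = 0 <;> by_cases h1 : σ 1 = 1 <;> simp [h0, h1] <;> norm_num
  rw [Finset.sum_congr rfl fun σ _ => h1 σ]
  rw [Finset.sum_add_distrib, Finset.sum_add_distrib, Finset.sum_add_distrib]
  rw [sum_perm_one (m+3)]
  have e0 : ∑ σ : Equiv.Perm (Fin (m+3)), (if σ 0 = 0 then (1:ℝ) else 0)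
      = ((m+2).factorial : ℝ) := ind0 (m+2)
  have e1 : ∑ σ : Equiv.Perm (Fin (m+3)), (if σ 1 = 1 then (1:ℝ) else 0)
      = ((m+2).factorial : ℝ) := ind1 (m+1)
  have e01 : ∑ σ : Equiv.Perm (Fin (m+3)), (if σ 0 = 0 ∧ σ 1 = 1 then (1:ℝ) else 0)
      = ((m+1).factorial : ℝ) := ind01 (m+1)
  rw [e0, e1, e01]
  ring

lemma isConvexBody_box {n : ℕ} {c : Fin n → ℝ} (hc : ∀ j, 0 < c j) :
    IsConvexBody (box c) := by
  refine ⟨?_, ?_, ?_⟩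
  · intro x hx y hy a b ha hb hab j
    have : (a • x + b • y) j = a * x j + b * y j := by
      simp [PiLp.add_apply, PiLp.smul_apply, smul_eq_mul]
    rw [this]
    exact (convex_Icc (0:ℝ) (c j)) (hx j) (hy j) ha hb hab
  · have key : box c = (PiLp.continuousLinearEquiv 2 ℝ (fun _ : Fin n => ℝ)).toHomeomorph ⁻¹'
        (Set.univ.pi fun j => Set.Icc 0 (c j)) := by
      ext x
      simp only [box, Set.mem_preimage, Set.mem_univ_pi, Set.mem_setOf_eq]
      rfl
    rw [key, Homeomorph.isCompact_preimage]
    exact isCompact_univ_pi fun j => isCompact_Icc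
  · have hU : IsOpen {x : EuclideanSpace ℝ (Fin n) | ∀ j, x j ∈ Set.Ioo 0 (c j)} := by
      have key : {x : EuclideanSpace ℝ (Fin n) | ∀ j, x j ∈ Set.Ioo 0 (c j)} =
          (PiLp.continuousLinearEquiv 2 ℝ (fun _ : Fin n => ℝ)).toHomeomorph ⁻¹'
          (Set.univ.pi fun j => Set.Ioo 0 (c j)) := by
        ext x
        simp only [Set.mem_preimage, Set.mem_univ_pi, Set.mem_setOf_eq]
        rfl
      rw [key]
      exact (isOpen_set_pi Set.finite_univ fun j _ => isOpen_Ioo).preimage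
        (Homeomorph.continuous _)
    have hsub : {x : EuclideanSpace ℝ (Fin n) | ∀ j, x j ∈ Set.Ioo 0 (c j)} ⊆ box c :=
      fun x hx j => Set.Ioo_subset_Icc_self (hx j)
    exact ⟨WithLp.toLp 2 (fun j => c j / 2 : Fin n → ℝ), interior_maximal hsub hU
      (fun j => ⟨half_pos (hc j), half_lt_self (hc j)⟩)⟩

/-- For the unit cube `C = [0,1]ⁿ ⊂ ℝⁿ` (`n ≥ 3`), there are convex
bodies `A, B` with `F_C(A,B) < 0`. -/
theorem cube_bezout_neg (n : ℕ) (hn : 3 ≤ n)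
    (C : Set (EuclideanSpace ℝ (Fin n)))
    (hC : C = {x : EuclideanSpace ℝ (Fin n) | ∀ i, x i ∈ Set.Icc (0 : ℝ) 1}) :
    ∃ A B : Set (EuclideanSpace ℝ (Fin n)),
      IsConvexBody A ∧ IsConvexBody B ∧ bezoutForm n C A B < 0 := by
  obtain ⟨m, rfl⟩ : ∃ m, n = m + 3 := ⟨n - 3, by omega⟩
  classical
  set aSide : Fin (m+3) → ℝ := fun j => if (j:ℕ) = 0 then 2 else 1 with haSide
  set bSide : Fin (m+3) → ℝ := fun j => if (j:ℕ) = 1 then 2 else 1 with hbSide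
  have hCbox : C = box (fun _ => (1:ℝ)) := by
    rw [hC]; ext x; simp [box]
  refine ⟨box aSide, box bSide, isConvexBody_box (fun j => by
      simp only [haSide]; split_ifs <;> norm_num),
    isConvexBody_box (fun j => by
      simp only [hbSide]; split_ifs <;> norm_num), ?_⟩
  have hnpos : 0 < m + 3 := by omega
  have hfA : (fun i : Fin (m+3) => if (i : ℕ) = 0 then box aSide else C)
      = fun i => box (sA m i) := by
    funext i
    by_cases hi : (i:ℕ) = 0
    · rw [if_pos hi]
      refine congrArg box (funext fun j => ?_)
      simp [haSide, sA, hi]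
    · rw [if_neg hi, hCbox]
      refine congrArg box (funext fun j => ?_)
      simp [sA, hi]
  have hfB : (fun i : Fin (m+3) => if (i : ℕ) = 0 then box bSide else C)
      = fun i => box (sB m i) := by
    funext i
    by_cases hi : (i:ℕ) = 0
    · rw [if_pos hi]
      refine congrArg box (funext fun j => ?_)
      simp [hbSide, sB, hi]
    · rw [if_neg hi, hCbox]
      refine congrArg box (funext fun j => ?_)
      simp [sB, hi]
  have hfAB : (fun i : Fin (m+3) => if (i : ℕ) = 0 then box aSide
        else if (i : ℕ) = 1 then box bSide else C)
      = fun i => box (sAB m i) := by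
    funext i
    by_cases hi : (i:ℕ) = 0
    · rw [if_pos hi]
      refine congrArg box (funext fun j => ?_)
      have : (i:ℕ) ≠ 1 := by omega
      simp [haSide, sAB, hi, this]
    · rw [if_neg hi]
      by_cases hi1 : (i:ℕ) = 1
      · rw [if_pos hi1]
        refine congrArg box (funext fun j => ?_)
        simp [hbSide, sAB, hi, hi1]
      · rw [if_neg hi1, hCbox]
        refine congrArg box (funext fun j => ?_)
        simp [sAB, hi, hi1]
  have hsA : ∀ i j, 0 ≤ sA m i j := fun i j => by
    unfold sA; split_ifs <;> norm_num
  have hsB : ∀ i j, 0 ≤ sB m i j := fun i j => by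
    unfold sB; split_ifs <;> norm_num
  have hsAB : ∀ i j, 0 ≤ sAB m i j := fun i j => by
    unfold sAB; split_ifs <;> norm_num
  have hvolC : (volume C).toReal = 1 := by
    rw [hCbox, volume_box]
    simp
  unfold bezoutForm
  rw [hfA, hfB, hfAB, hvolC, mixedVol_box hnpos _ hsA, mixedVol_box hnpos _ hsB,
    mixedVol_box hnpos _ hsAB, SA_val, SB_val, SAB_val]
  -- arithmetic
  set x : ℝ := ((m+1).factorial : ℝ) with hx
  have hxpos : (0:ℝ) < x := by
    rw [hx]
    exact_mod_cast Nat.factorial_pos (m+1)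
  have h2 : ((m+2).factorial : ℝ) = (m+2) * x := by
    rw [hx, show (m+2).factorial = (m+2) * (m+1).factorial from Nat.factorial_succ (m+1)]
    push_cast
    ring
  have h3 : ((m+3).factorial : ℝ) = (m+3) * ((m+2) * x) := by
    rw [show (m+3).factorial = (m+3) * (m+2).factorial from Nat.factorial_succ (m+2)]
    push_cast [h2]
    ring
  rw [h2, h3]
  have hm : (0:ℝ) ≤ (m:ℝ) := Nat.cast_nonneg m
  have hq : (0:ℝ) < (m+3) * ((m+2) * x) := by positivity
  have expand : ∀ q a y : ℝ, 0 < q →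
      1/q*(q+a) * (1/q*(q+a)) - 1/q*(q+2*a+y)*1 = (a*a - y*q)/(q*q) := by
    intro q a y hq0
    field_simp
    ring
  rw [expand _ _ _ hq]
  apply div_neg_of_neg_of_pos
  · nlinarith [mul_pos hxpos hxpos, hm, hxpos]
  · positivity

end
end

section
/- Let n ≥ 3, let L ⊂ ℝ^{n−1} × {0} ⊂ ℝⁿ be an (n−1)-dimensional compact convex set, let t > 0, and let C = L + [0, t·eₙ] be the cylinder over L of height t. Then there exist convex bodies A, B ⊂ ℝⁿ such that F_C(A,B) < 0 (equivalently, the Bezout constant b₂(C) > 1). -/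
open MeasureTheory
open scoped Pointwise

noncomputable section

/-! ### Auxiliary material for `cylinder_bezout_neg` -/

section Aux

open Finset

noncomputable def altE (d m : ℕ) : ℝ :=
  ∑ k ∈ range (d+1), (-1 : ℝ)^k * (d.choose k : ℝ) * ((k:ℝ)+1)^m

lemma altE_succ (d m : ℕ) :
    altE (d+1) m = altE d m - ∑ r ∈ range (m+1), (m.choose r : ℝ) * altE d r := by
  have h1 : altE (d+1) m
      = (∑ k ∈ range (d+1), (-1:ℝ)^(k+1) * ((d.choose k : ℝ) + (d.choose (k+1) : ℝ))
          * ((k:ℝ)+2)^m) + 1 := by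
    rw [altE, Finset.sum_range_succ']
    congr 1
    · refine Finset.sum_congr rfl fun k _ => ?_
      rw [Nat.choose_succ_succ']
      push_cast
      ring
    · norm_num
  have h2 : (∑ k ∈ range (d+1), (-1:ℝ)^(k+1) * (d.choose (k+1) : ℝ) * ((k:ℝ)+2)^m) + 1
      = altE d m := by
    have he2 : ∑ k ∈ range (d+2), (-1:ℝ)^k * (d.choose k : ℝ) * ((k:ℝ)+1)^m
        = (∑ k ∈ range (d+1), (-1:ℝ)^(k+1) * (d.choose (k+1) : ℝ) * ((k:ℝ)+2)^m) + 1 := by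
      rw [Finset.sum_range_succ']
      congr 1
      · refine Finset.sum_congr rfl fun k _ => ?_
        push_cast
        ring
      · norm_num
    rw [← he2, Finset.sum_range_succ, altE]
    simp [Nat.choose_succ_self]
  have h3 : ∀ k : ℕ, (((k:ℝ))+2)^m
      = ∑ r ∈ range (m+1), (m.choose r : ℝ) * ((k:ℝ)+1)^r := by
    intro k
    have hb := add_pow ((k:ℝ)+1) 1 m
    simp only [one_pow, mul_one] at hb
    rw [show ((k:ℝ) + 2) = ((k:ℝ)+1+1) by ring, hb]
    refine Finset.sum_congr rfl fun r hr => ?_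
    ring
  have h4 : (∑ k ∈ range (d+1), (-1:ℝ)^(k+1) * (d.choose k : ℝ) * ((k:ℝ)+2)^m)
      = - ∑ r ∈ range (m+1), (m.choose r : ℝ) * altE d r := by
    have ht : ∀ k ∈ range (d+1), (-1:ℝ)^(k+1) * (d.choose k : ℝ) * ((k:ℝ)+2)^m
        = ∑ r ∈ range (m+1), ((m.choose r : ℝ) * ((-1:ℝ)^(k+1) * (d.choose k : ℝ) * ((k:ℝ)+1)^r)) := by
      intro k _
      rw [h3 k, Finset.mul_sum]
      refine Finset.sum_congr rfl fun r _ => ?_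
      ring
    rw [Finset.sum_congr rfl ht, Finset.sum_comm, ← Finset.sum_neg_distrib]
    refine Finset.sum_congr rfl fun r _ => ?_
    rw [altE, Finset.mul_sum, ← Finset.sum_neg_distrib]
    refine Finset.sum_congr rfl fun k _ => ?_
    ring
  calc altE (d+1) m
      = (∑ k ∈ range (d+1), (-1:ℝ)^(k+1) * ((d.choose k : ℝ)) * ((k:ℝ)+2)^m)
        + ((∑ k ∈ range (d+1), (-1:ℝ)^(k+1) * (d.choose (k+1) : ℝ) * ((k:ℝ)+2)^m) + 1) := by
        rw [h1, ← add_assoc, ← Finset.sum_add_distrib]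
        congr 1
        refine Finset.sum_congr rfl fun k _ => ?_
        ring
    _ = altE d m - ∑ r ∈ range (m+1), (m.choose r : ℝ) * altE d r := by
        rw [h2, h4]; ring

lemma altE_spec (d : ℕ) : (∀ m, m < d → altE d m = 0) ∧ altE d d = (-1:ℝ)^d * (d.factorial : ℝ) := by
  induction d with
  | zero =>
    refine ⟨fun m hm => by omega, ?_⟩
    simp [altE]
  | succ d ih =>
    obtain ⟨ih0, ihd⟩ := ih
    have hlow : ∀ m, m < d + 1 → altE (d+1) m = 0 := by
      intro m hm
      rw [altE_succ]
      rcases Nat.lt_or_ge m d with h | h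
      · rw [ih0 m h]
        rw [Finset.sum_eq_zero, sub_zero]
        intro r hr
        rw [ih0 r (by simp at hr; omega)]
        ring
      · have hmd : m = d := by omega
        subst hmd
        rw [Finset.sum_range_succ]
        simp only [Nat.choose_self, Nat.cast_one, one_mul]
        rw [Finset.sum_eq_zero, zero_add, sub_self]
        intro r hr
        rw [ih0 r (by simpa using hr)]
        ring
    refine ⟨hlow, ?_⟩
    rw [altE_succ]
    have hE : altE d (d+1) - ∑ r ∈ range (d+2), ((d+1).choose r : ℝ) * altE d r
        = - (((d+1).choose d : ℝ) * altE d d) := by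
      rw [Finset.sum_range_succ, Finset.sum_range_succ]
      simp only [Nat.choose_self, Nat.cast_one, one_mul]
      rw [Finset.sum_eq_zero, zero_add]
      · ring
      · intro r hr
        rw [ih0 r (by simpa using hr)]; ring
    rw [hE, ihd]
    rw [Nat.choose_succ_self_right]
    rw [Nat.factorial_succ]
    push_cast
    ring

lemma neg_one_pow_sub_real {a b : ℕ} (h : b ≤ a) : (-1:ℝ)^(a-b) = (-1)^a * (-1)^b := by
  have h1 : (-1:ℝ)^a = (-1)^(a-b) * (-1)^b := by
    rw [← pow_add, Nat.sub_add_cancel h]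
  rw [h1, mul_assoc, ← pow_add, ← two_mul, pow_mul]
  norm_num

lemma coeff_const (n : ℕ) (hn : 1 ≤ n) (i : Fin n) :
    ∑ J : Finset (Fin n), (if i ∈ J then (-1:ℝ)^(n - J.card) * ((J.card:ℝ))^(n-1) else 0)
      = ((n-1).factorial : ℝ) := by
  classical
  set s := (univ : Finset (Fin n)).erase i with hs
  have hins : insert i s = univ := Finset.insert_erase (mem_univ i)
  have hinot : i ∉ s := Finset.notMem_erase i univ
  have hcard : s.card = n - 1 := by
    rw [hs, Finset.card_erase_of_mem (mem_univ i), Finset.card_univ, Fintype.card_fin]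
  have h0 : ∑ J : Finset (Fin n), (if i ∈ J then (-1:ℝ)^(n - J.card) * ((J.card:ℝ))^(n-1) else 0)
      = ∑ J ∈ (insert i s).powerset, (if i ∈ J then (-1:ℝ)^(n - J.card) * ((J.card:ℝ))^(n-1) else 0) := by
    rw [hins, Finset.powerset_univ]
  rw [h0, Finset.sum_powerset_insert hinot]
  have h1 : ∑ t ∈ s.powerset, (if i ∈ t then (-1:ℝ)^(n - t.card) * ((t.card:ℝ))^(n-1) else 0) = 0 := by
    refine Finset.sum_eq_zero fun t ht => ?_
    rw [if_neg]
    exact fun hit => hinot (Finset.mem_powerset.1 ht hit)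
  have h2 : ∀ t ∈ s.powerset, (if i ∈ insert i t then (-1:ℝ)^(n - (insert i t).card) * (((insert i t).card:ℝ))^(n-1) else 0)
      = (-1:ℝ)^(n - (t.card+1)) * ((t.card:ℝ)+1)^(n-1) := by
    intro t ht
    have hit : i ∉ t := fun hit => hinot (Finset.mem_powerset.1 ht hit)
    rw [if_pos (Finset.mem_insert_self i t), Finset.card_insert_of_notMem hit]
    push_cast
    ring_nf
  rw [h1, zero_add, Finset.sum_congr rfl h2, Finset.sum_powerset_apply_card
    (fun k => (-1:ℝ)^(n - (k+1)) * ((k:ℝ)+1)^(n-1))]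
  set d := n - 1 with hd
  rw [hcard]
  have hsum : ∑ k ∈ range (d+1), (n-1).choose k • ((-1:ℝ)^(n - (k+1)) * ((k:ℝ)+1)^(n-1))
      = (-1:ℝ)^d * altE d d := by
    rw [altE, Finset.mul_sum]
    refine Finset.sum_congr rfl fun k hk => ?_
    have hk' : k ≤ d := by simpa [Nat.lt_succ_iff] using hk
    have hnk : n - (k+1) = d - k := by omega
    rw [hnk, neg_one_pow_sub_real hk', nsmul_eq_mul]
    ring
  rw [hsum, (altE_spec d).2, ← mul_assoc, ← pow_add, ← two_mul, pow_mul]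
  norm_num

lemma sum_J_formula (n : ℕ) (hn : 1 ≤ n) (h : Fin n → ℝ) :
    ∑ J : Finset (Fin n), (-1:ℝ)^(n - J.card) * ((∑ i ∈ J, h i) * ((J.card:ℝ))^(n-1))
      = ((n-1).factorial : ℝ) * ∑ i, h i := by
  classical
  have hJ : ∀ J : Finset (Fin n), (-1:ℝ)^(n-J.card) * ((∑ i ∈ J, h i) * (J.card:ℝ)^(n-1))
      = ∑ i : Fin n, (h i * if i ∈ J then (-1:ℝ)^(n-J.card) * (J.card:ℝ)^(n-1) else 0) := by
    intro J
    have hmem : (∑ i ∈ J, h i) = ∑ i : Fin n, (if i ∈ J then h i else 0) := by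
      rw [Finset.sum_ite_mem, Finset.univ_inter]
    rw [hmem, Finset.sum_mul, Finset.mul_sum]
    refine Finset.sum_congr rfl fun i _ => ?_
    by_cases hi : i ∈ J <;> simp [hi] <;> ring
  rw [Finset.sum_congr rfl (fun J _ => hJ J), Finset.sum_comm]
  rw [Finset.mul_sum]
  refine Finset.sum_congr rfl fun i _ => ?_
  rw [← Finset.mul_sum, coeff_const n hn i]
  ring

abbrev Eucl (n : ℕ) := EuclideanSpace ℝ (Fin n)

def lastVec (m : ℕ) : Eucl (m+1) := EuclideanSpace.single (Fin.last m) (1:ℝ)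

def projL (m : ℕ) : Eucl (m+1) →ₗ[ℝ] Eucl m where
  toFun x := WithLp.toLp 2 (fun j : Fin m => x j.castSucc)
  map_add' _ _ := rfl
  map_smul' _ _ := rfl

def seg (m : ℕ) (H : ℝ) : Set (Eucl (m+1)) := (fun r : ℝ => r • lastVec m) '' Set.Icc 0 H

lemma prism_eq (m : ℕ) (M : Set (Eucl (m+1))) (hM : ∀ x ∈ M, x (Fin.last m) = 0)
    (H : ℝ) :
    M + seg m H = {x : Eucl (m+1) | projL m x ∈ projL m '' M ∧ x (Fin.last m) ∈ Set.Icc 0 H} := by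
  have hel : (lastVec m) (Fin.last m) = 1 := by simp [lastVec, EuclideanSpace.single_apply]
  have hec : ∀ j : Fin m, (lastVec m) j.castSucc = 0 := by
    intro j
    rw [lastVec, EuclideanSpace.single_apply, if_neg (Fin.ne_of_lt (Fin.castSucc_lt_last j))]
  ext x
  constructor
  · rintro ⟨y, hy, -, ⟨r, hr, rfl⟩, rfl⟩
    constructor
    · refine ⟨y, hy, ?_⟩
      refine PiLp.ext fun j => ?_
      show y j.castSucc = y j.castSucc + r * (lastVec m) j.castSucc
      rw [hec j]; ring
    · show y (Fin.last m) + r * (lastVec m) (Fin.last m) ∈ Set.Icc 0 H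
      rw [hel, hM y hy, zero_add, mul_one]; exact hr
  · rintro ⟨⟨y, hy, hpy⟩, hlast⟩
    refine ⟨y, hy, x (Fin.last m) • lastVec m, ⟨x (Fin.last m), hlast, rfl⟩, ?_⟩
    refine PiLp.ext fun i => ?_
    induction i using Fin.lastCases with
    | last =>
      show y (Fin.last m) + x (Fin.last m) * (lastVec m) (Fin.last m) = x (Fin.last m)
      rw [hel, hM y hy, zero_add, mul_one]
    | cast j =>
      show y j.castSucc + x (Fin.last m) * (lastVec m) j.castSucc = x j.castSucc
      rw [hec j, mul_zero, add_zero]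
      exact congrFun (congrArg WithLp.ofLp hpy) j

lemma prism_volume (m : ℕ) (M : Set (Eucl (m+1))) (hM : ∀ x ∈ M, x (Fin.last m) = 0)
    (H : ℝ) :
    volume (M + seg m H) = ENNReal.ofReal H * volume (projL m '' M) := by
  rw [prism_eq m M hM H]
  set M' : Set (Eucl m) := projL m '' M with hM'
  have hφ := EuclideanSpace.volume_preserving_symm_measurableEquiv_toLp (Fin (m+1))
  have hψ := MeasureTheory.volume_preserving_piFinSuccAbove (fun _ : Fin (m+1) => ℝ) (Fin.last m)
  have hφm := EuclideanSpace.volume_preserving_symm_measurableEquiv_toLp (Fin m)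
  set φ := (MeasurableEquiv.toLp 2 (Fin (m+1) → ℝ)).symm
  set ψ := MeasurableEquiv.piFinSuccAbove (fun _ : Fin (m+1) => ℝ) (Fin.last m)
  set φm := (MeasurableEquiv.toLp 2 (Fin m → ℝ)).symm
  set T : Set (ℝ × (Fin m → ℝ)) := (Set.Icc 0 H) ×ˢ (φm.symm ⁻¹' M') with hT
  have hS : {x : Eucl (m+1) | projL m x ∈ M' ∧ x (Fin.last m) ∈ Set.Icc 0 H}
      = φ ⁻¹' (ψ ⁻¹' T) := by
    ext x
    show (projL m x ∈ M' ∧ x (Fin.last m) ∈ Set.Icc 0 H) ↔ ψ (φ x) ∈ T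
    have hψx : ψ (φ x) = (x (Fin.last m), fun j => x ((Fin.last m).succAbove j)) := rfl
    rw [hψx, hT, Set.mem_prod]
    have h2 : (fun j => x ((Fin.last m).succAbove j)) ∈ φm.symm ⁻¹' M' ↔ projL m x ∈ M' := by
      have hfe : (fun j => x ((Fin.last m).succAbove j)) = φm (projL m x) := by
        funext j
        rw [Fin.succAbove_last]
        rfl
      rw [hfe]
      exact Iff.rfl
    rw [h2]
    tauto
  rw [hS, hφ.measure_preimage_equiv, hψ.measure_preimage_equiv,
    MeasureTheory.Measure.volume_eq_prod, MeasureTheory.Measure.prod_prod,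
    (MeasurePreserving.symm φm hφm).measure_preimage_equiv, Real.volume_Icc, sub_zero]

lemma segment_eq_seg (m : ℕ) {H : ℝ} (hH : 0 ≤ H) :
    segment ℝ (0 : Eucl (m+1)) (H • lastVec m) = seg m H := by
  rw [segment_eq_image]
  simp only [smul_zero, sub_smul, one_smul, smul_sub, zero_add, sub_zero]
  have h1 : (fun θ : ℝ => θ • (H • lastVec m)) = (fun r : ℝ => r • lastVec m) ∘ (fun θ : ℝ => θ * H) := by
    funext θ
    simp [smul_smul]
  rw [h1, Set.image_comp, Set.image_mul_right_Icc zero_le_one hH]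
  norm_num [seg]

lemma seg_add {m : ℕ} {a b : ℝ} (ha : 0 ≤ a) (hb : 0 ≤ b) : seg m a + seg m b = seg m (a+b) := by
  have h : (fun r : ℝ => r • lastVec m) = ⇑(LinearMap.toSpanSingleton ℝ (Eucl (m+1)) (lastVec m)) := rfl
  rw [seg, seg, seg, h, ← Set.image_add, Set.Icc_add_Icc ha hb, zero_add]

lemma cyl_sum {m : ℕ} {ι : Type*} (L : Set (Eucl (m+1))) (hL : Convex ℝ L)
    (h : ι → ℝ) (hh : ∀ i, 0 ≤ h i) (J : Finset ι) (hJ : J.Nonempty) :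
    ∑ i ∈ J, (L + seg m (h i)) = (J.card : ℝ) • L + seg m (∑ i ∈ J, h i) := by
  induction hJ using Finset.Nonempty.cons_induction with
  | singleton a => simp [one_smul]
  | cons a s ha hs ih =>
    rw [Finset.sum_cons, ih, Finset.sum_cons, Finset.card_cons]
    have hrearr : (L + seg m (h a)) + ((s.card : ℝ) • L + seg m (∑ i ∈ s, h i))
        = (L + (s.card : ℝ) • L) + (seg m (h a) + seg m (∑ i ∈ s, h i)) := by
      abel
    rw [hrearr, seg_add (hh a) (Finset.sum_nonneg fun i _ => hh i)]
    have hsm : L + (s.card : ℝ) • L = ((s.card + 1 : ℕ) : ℝ) • L := by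
      rw [show ((s.card + 1 : ℕ) : ℝ) = (1 : ℝ) + (s.card : ℝ) by push_cast; ring,
        hL.add_smul zero_le_one (by positivity), one_smul]
    rw [hsm]

lemma vol_cyl_sum {m : ℕ} (L : Set (Eucl (m+1))) (hL : Convex ℝ L)
    (hLpl : ∀ x ∈ L, x (Fin.last m) = 0) {ι : Type*}
    (h : ι → ℝ) (hh : ∀ i, 0 ≤ h i) (J : Finset ι) :
    volume (∑ i ∈ J, (L + seg m (h i)))
      = ENNReal.ofReal (∑ i ∈ J, h i) *
        (ENNReal.ofReal (((J.card : ℝ))^m) * volume (projL m '' L)) := by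
  rcases J.eq_empty_or_nonempty with rfl | hJ
  · simp only [Finset.sum_empty, Finset.card_empty]
    rw [show (0 : Set (Eucl (m+1))) = {0} from rfl, measure_singleton]
    simp
  · rw [cyl_sum L hL h hh J hJ]
    have hM : ∀ x ∈ (J.card : ℝ) • L, x (Fin.last m) = 0 := by
      rintro x ⟨y, hy, rfl⟩
      show (J.card : ℝ) * y (Fin.last m) = 0
      rw [hLpl y hy, mul_zero]
    rw [prism_volume m _ hM _]
    congr 1
    rw [image_smul_set, MeasureTheory.Measure.addHaar_smul_of_nonneg volume (by positivity)]
    congr 2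
    rw [finrank_euclideanSpace_fin]

lemma mixedVol_cyl (m : ℕ) (L : Set (Eucl (m+1))) (hL : Convex ℝ L)
    (hLpl : ∀ x ∈ L, x (Fin.last m) = 0)
    (hfin : volume (projL m '' L) ≠ ⊤)
    (h : Fin (m+1) → ℝ) (hh : ∀ i, 0 ≤ h i) :
    mixedVol (m+1) (fun i => L + seg m (h i))
      = (volume (projL m '' L)).toReal * (∑ i, h i) / (m+1) := by
  rw [mixedVol]
  have hvol : ∀ J : Finset (Fin (m+1)),
      (volume (∑ i ∈ J, (L + seg m (h i)))).toReal
        = (-0) + (∑ i ∈ J, h i) * ((J.card:ℝ))^m * (volume (projL m '' L)).toReal := by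
    intro J
    rw [vol_cyl_sum L hL hLpl h hh J, ENNReal.toReal_mul, ENNReal.toReal_mul,
      ENNReal.toReal_ofReal (Finset.sum_nonneg fun i _ => hh i),
      ENNReal.toReal_ofReal (by positivity)]
    ring
  have hstep : ∑ J : Finset (Fin (m+1)), (-1 : ℝ) ^ (m+1 - J.card) *
      (volume (∑ i ∈ J, (L + seg m (h i)))).toReal
      = (volume (projL m '' L)).toReal *
        ∑ J : Finset (Fin (m+1)), (-1 : ℝ) ^ (m+1 - J.card) * ((∑ i ∈ J, h i) * ((J.card:ℝ))^m) := by
    rw [Finset.mul_sum]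
    refine Finset.sum_congr rfl fun J _ => ?_
    rw [hvol J]
    ring
  rw [hstep]
  have hkey := sum_J_formula (m+1) (by omega) h
  have hm1 : (m+1) - 1 = m := rfl
  rw [hm1] at hkey
  rw [hkey, Nat.factorial_succ]
  have hfac : (0:ℝ) < (m.factorial : ℝ) := by positivity
  field_simp
  push_cast
  ring

end Aux

/-- the last-coordinate functional. -/
def lastF (m : ℕ) : Eucl (m+1) →ₗ[ℝ] ℝ where
  toFun x := x (Fin.last m)
  map_add' _ _ := rfl
  map_smul' _ _ := rfl

set_option maxHeartbeats 2000000 in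
/-- For the cylinder `C = L + [0, t eₙ]` over an `(n−1)`-dimensional
compact convex set `L ⊂ ℝ^{n−1} × {0}` (`n ≥ 3`, `t > 0`), there are convex bodies
`A, B` with `F_C(A,B) < 0`. -/
theorem cylinder_bezout_neg (n : ℕ) (hn : 3 ≤ n)
    (L : Set (EuclideanSpace ℝ (Fin n))) (hL : Convex ℝ L) (hLc : IsCompact L)
    (hLdim : setDim L = n - 1)
    (hLplane : ∀ x ∈ L, x ⟨n - 1, by omega⟩ = 0)
    (t : ℝ) (ht : 0 < t)
    (C : Set (EuclideanSpace ℝ (Fin n)))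
    (hC : C = L + segment ℝ (0 : EuclideanSpace ℝ (Fin n))
      (t • EuclideanSpace.single (⟨n - 1, by omega⟩ : Fin n) (1 : ℝ))) :
    ∃ A B : Set (EuclideanSpace ℝ (Fin n)),
      IsConvexBody A ∧ IsConvexBody B ∧ bezoutForm n C A B < 0 := by
  obtain ⟨m, rfl⟩ : ∃ m, n = m + 1 := ⟨n - 1, by omega⟩
  have hm : 2 ≤ m := by omega
  have hLpl : ∀ x ∈ L, x (Fin.last m) = 0 := hLplane
  have hdimL : Module.finrank ℝ (vectorSpan ℝ L) = m := hLdim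
  -- L is nonempty
  have hLne : L.Nonempty := by
    rcases L.eq_empty_or_nonempty with rfl | h
    · exfalso
      rw [vectorSpan_empty, finrank_bot] at hdimL
      omega
    · exact h
  set M' := projL m '' L with hM'def
  -- the vector span of L lies in the hyperplane
  have hsub : vectorSpan ℝ L ≤ LinearMap.ker (lastF m) := by
    rw [vectorSpan_def, Submodule.span_le]
    rintro v ⟨x, hx, y, hy, rfl⟩
    simp only [SetLike.mem_coe, LinearMap.mem_ker]
    show x (Fin.last m) - y (Fin.last m) = 0
    rw [hLpl x hx, hLpl y hy, sub_zero]
  -- projL is injective on the vector span of L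
  have hinj : Function.Injective ((projL m).domRestrict (vectorSpan ℝ L)) := by
    rw [← LinearMap.ker_eq_bot, Submodule.eq_bot_iff]
    rintro ⟨v, hv⟩ hker
    have hpv : projL m v = 0 := hker
    have hlv : v (Fin.last m) = 0 := hsub hv
    refine Subtype.ext ?_
    show v = 0
    refine PiLp.ext fun i => ?_
    induction i using Fin.lastCases with
    | last => exact hlv
    | cast j => exact congrFun (congrArg WithLp.ofLp hpv) j
  have hrange := LinearMap.finrank_range_of_inj hinj
  rw [LinearMap.range_domRestrict] at hrange
  -- the vector span of M' is everything
  have hmapspan : Submodule.map (projL m) (vectorSpan ℝ L) = vectorSpan ℝ M' := by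
    rw [vectorSpan_def, vectorSpan_def, Submodule.map_span]
    congr 1
    ext v
    constructor
    · rintro ⟨u, hu, rfl⟩
      obtain ⟨x, hx, y, hy, rfl⟩ := hu
      refine ⟨projL m x, ⟨x, hx, rfl⟩, projL m y, ⟨y, hy, rfl⟩, ?_⟩
      show projL m x - projL m y = projL m (x - y)
      rw [map_sub]
    · rintro ⟨px, ⟨x, hx, rfl⟩, py, ⟨y, hy, rfl⟩, rfl⟩
      refine ⟨x - y, ⟨x, hx, y, hy, rfl⟩, ?_⟩
      show projL m (x - y) = projL m x - projL m y
      rw [map_sub]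
  have hrankM' : Module.finrank ℝ (vectorSpan ℝ M') = m := by
    rw [← hmapspan, hrange, hdimL]
  have htop : vectorSpan ℝ M' = ⊤ :=
    Submodule.eq_top_of_finrank_eq (by rw [hrankM', finrank_euclideanSpace_fin])
  have hM'ne : M'.Nonempty := hLne.image _
  have hM'conv : Convex ℝ M' := hL.linear_image (projL m)
  have haff : affineSpan ℝ M' = ⊤ :=
    (AffineSubspace.affineSpan_eq_top_iff_vectorSpan_eq_top_of_nonempty ℝ _ _ hM'ne).mpr htop
  have hint : (interior M').Nonempty :=
    hM'conv.interior_nonempty_iff_affineSpan_eq_top.mpr haff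
  have hM'cpt : IsCompact M' := hLc.image (projL m).continuous_of_finiteDimensional
  have hfin : volume M' ≠ ⊤ := hM'cpt.measure_lt_top.ne
  have hpos : 0 < volume M' := by
    calc (0:ENNReal) < volume (interior M') := isOpen_interior.measure_pos volume hint
    _ ≤ volume M' := measure_mono interior_subset
  set w := (volume M').toReal with hwdef
  have hw : 0 < w := ENNReal.toReal_pos hpos.ne' hfin
  -- the cylinder is L + seg m t
  have hCeq : C = L + seg m t := by
    have hsingle : (t • EuclideanSpace.single (⟨m + 1 - 1, by omega⟩ : Fin (m+1)) (1 : ℝ))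
        = t • lastVec m := rfl
    rw [hC, hsingle, segment_eq_seg m ht.le]
  set A := L + seg m (t/2) with hA
  set B := L + seg m (2*t) with hB
  -- cylinders over L are convex bodies
  have hbody : ∀ H : ℝ, 0 < H → IsConvexBody (L + seg m H) := by
    intro H hH
    refine ⟨hL.add ?_, hLc.add ?_, ?_⟩
    · rw [← segment_eq_seg m hH.le]
      exact convex_segment _ _
    · exact (isCompact_Icc).image (continuous_id.smul continuous_const)
    · obtain ⟨y, hy⟩ := hint
      set x : Eucl (m+1) := WithLp.toLp 2 (fun i : Fin (m+1) => if hi : (i:ℕ) < m then y ⟨i, hi⟩ else H/2)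
        with hx
      have hproj : projL m x = y := by
        refine PiLp.ext fun j => ?_
        have hj : ((j.castSucc : Fin (m+1)) : ℕ) < m := j.is_lt
        show (if hi : ((j.castSucc : Fin (m+1)) : ℕ) < m
            then y ⟨(j.castSucc : Fin (m+1)), hi⟩ else H/2) = y j
        rw [dif_pos hj]
        exact congrArg y (Fin.ext (by simp))
      have hxlast : x (Fin.last m) = H/2 := by
        show (if hi : ((Fin.last m : Fin (m+1)) : ℕ) < m
            then y ⟨(Fin.last m : Fin (m+1)), hi⟩ else H/2) = H/2
        exact dif_neg (by simp)
      have hopen : IsOpen ((projL m) ⁻¹' (interior M') ∩ (lastF m) ⁻¹' (Set.Ioo 0 H)) :=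
        (isOpen_interior.preimage (projL m).continuous_of_finiteDimensional).inter
          (isOpen_Ioo.preimage (lastF m).continuous_of_finiteDimensional)
      have hsubset : ((projL m) ⁻¹' (interior M') ∩ (lastF m) ⁻¹' (Set.Ioo 0 H))
          ⊆ L + seg m H := by
        rw [prism_eq m L hLpl H]
        rintro z ⟨hz1, hz2⟩
        exact ⟨interior_subset hz1, Set.mem_Icc_of_Ioo hz2⟩
      have hxmem : x ∈ (projL m) ⁻¹' (interior M') ∩ (lastF m) ⁻¹' (Set.Ioo 0 H) := by
        constructor
        · rw [Set.mem_preimage, hproj]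
          exact hy
        · rw [Set.mem_preimage]
          show x (Fin.last m) ∈ Set.Ioo 0 H
          rw [hxlast]
          constructor <;> linarith
      exact ⟨x, interior_maximal hsubset hopen hxmem⟩
  refine ⟨A, B, hbody _ (by linarith), hbody _ (by linarith), ?_⟩
  -- volume of the cylinder
  have hvolC : (volume C).toReal = t * w := by
    rw [hCeq, prism_volume m L hLpl t, ENNReal.toReal_mul, ENNReal.toReal_ofReal ht.le]
  -- identify the three tuples of bodies as tuples of cylinders
  have h1iff : ∀ i : Fin (m+1), ((i:ℕ) = 1) ↔ i = 1 := by
    intro i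
    rw [Fin.ext_iff, Fin.val_one']
    rw [Nat.mod_eq_of_lt (by omega)]
  have h0iff : ∀ i : Fin (m+1), ((i:ℕ) = 0) ↔ i = 0 := by
    intro i
    rw [Fin.ext_iff, Fin.val_zero]
  have h01 : (0 : Fin (m+1)) ≠ 1 := by
    intro hq
    have hv := congrArg Fin.val hq
    rw [Fin.val_zero, Fin.val_one', Nat.mod_eq_of_lt (by omega)] at hv
    omega
  have htuple1 : (fun i : Fin (m+1) => if (i : ℕ) = 0 then A else C)
      = fun i : Fin (m+1) => L + seg m (if (i : ℕ) = 0 then t/2 else t) := by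
    funext i
    split_ifs with h0
    · exact hA
    · exact hCeq
  have htuple2 : (fun i : Fin (m+1) => if (i : ℕ) = 0 then B else C)
      = fun i : Fin (m+1) => L + seg m (if (i : ℕ) = 0 then 2*t else t) := by
    funext i
    split_ifs with h0
    · exact hB
    · exact hCeq
  have htuple3 : (fun i : Fin (m+1) => if (i : ℕ) = 0 then A else if (i:ℕ) = 1 then B else C)
      = fun i : Fin (m+1) => L + seg m (if (i : ℕ) = 0 then t/2 else if (i:ℕ) = 1 then 2*t else t) := by
    funext i
    split_ifs with h0 h1
    · exact hA
    · exact hB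
    · exact hCeq
  -- sums of heights
  have hcardu : (Finset.univ : Finset (Fin (m+1))).card = m + 1 := by
    rw [Finset.card_univ, Fintype.card_fin]
  have hsum1 : ∀ a : ℝ, (∑ i : Fin (m+1), if (i:ℕ) = 0 then a else t) = a + m * t := by
    intro a
    have hre : ∀ i : Fin (m+1), (if (i:ℕ) = 0 then a else t)
        = t + (if i = (0 : Fin (m+1)) then a - t else 0) := by
      intro i
      by_cases h0 : i = 0
      · rw [if_pos ((h0iff i).mpr h0), if_pos h0]
        ring
      · rw [if_neg (fun hv => h0 ((h0iff i).mp hv)), if_neg h0]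
        ring
    rw [Finset.sum_congr rfl fun i _ => hre i, Finset.sum_add_distrib, Finset.sum_const,
      Finset.sum_ite_eq' Finset.univ (0 : Fin (m+1)) (fun _ => a - t),
      if_pos (Finset.mem_univ _), hcardu, nsmul_eq_mul]
    push_cast
    ring
  have hsum3 : (∑ i : Fin (m+1), if (i:ℕ) = 0 then t/2 else if (i:ℕ) = 1 then 2*t else t)
      = t/2 + 2*t + ((m:ℝ) - 1) * t := by
    have hre : ∀ i : Fin (m+1), (if (i:ℕ) = 0 then t/2 else if (i:ℕ) = 1 then 2*t else t)
        = t + (if i = (0 : Fin (m+1)) then t/2 - t else 0)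
            + (if i = (1 : Fin (m+1)) then 2*t - t else 0) := by
      intro i
      by_cases h0 : i = 0
      · rw [if_pos ((h0iff i).mpr h0), if_pos h0, if_neg (by rw [h0]; exact h01)]
        ring
      · rw [if_neg (fun hv => h0 ((h0iff i).mp hv)), if_neg h0]
        by_cases h1 : i = 1
        · rw [if_pos ((h1iff i).mpr h1), if_pos h1]
          ring
        · rw [if_neg (fun hv => h1 ((h1iff i).mp hv)), if_neg h1]
          ring
    rw [Finset.sum_congr rfl fun i _ => hre i, Finset.sum_add_distrib, Finset.sum_add_distrib,
      Finset.sum_const,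
      Finset.sum_ite_eq' Finset.univ (0 : Fin (m+1)) (fun _ => t/2 - t),
      Finset.sum_ite_eq' Finset.univ (1 : Fin (m+1)) (fun _ => 2*t - t),
      if_pos (Finset.mem_univ _), if_pos (Finset.mem_univ _), hcardu, nsmul_eq_mul]
    push_cast
    ring
  -- nonnegativity of all height functions
  have hnn1 : ∀ i : Fin (m+1), 0 ≤ (if (i:ℕ) = 0 then t/2 else t) := by
    intro i; split_ifs <;> linarith
  have hnn2 : ∀ i : Fin (m+1), 0 ≤ (if (i:ℕ) = 0 then 2*t else t) := by
    intro i; split_ifs <;> linarith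
  have hnn3 : ∀ i : Fin (m+1), 0 ≤ (if (i:ℕ) = 0 then t/2 else if (i:ℕ) = 1 then 2*t else t) := by
    intro i; split_ifs <;> linarith
  have e1 : mixedVol (m+1) (fun i => if (i : ℕ) = 0 then A else C)
      = w * (t/2 + m * t) / (m+1) := by
    rw [htuple1, mixedVol_cyl m L hL hLpl hfin _ hnn1, hsum1 (t/2)]
  have e2 : mixedVol (m+1) (fun i => if (i : ℕ) = 0 then B else C)
      = w * (2*t + m * t) / (m+1) := by
    rw [htuple2, mixedVol_cyl m L hL hLpl hfin _ hnn2, hsum1 (2*t)]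
  have e3 : mixedVol (m+1) (fun i => if (i : ℕ) = 0 then A else if (i:ℕ) = 1 then B else C)
      = w * (t/2 + 2*t + ((m:ℝ) - 1) * t) / (m+1) := by
    rw [htuple3, mixedVol_cyl m L hL hLpl hfin _ hnn3, hsum3]
  rw [bezoutForm, e1, e2, e3, hvolC]
  have hm1 : (0:ℝ) < (m:ℝ) + 1 := by positivity
  have key : w * (t/2 + m * t) / (m+1) * (w * (2*t + m * t) / (m+1))
      - w * (t/2 + 2*t + ((m:ℝ) - 1) * t) / (m+1) * (t * w)
      = -((w*t)^2) / (2 * ((m:ℝ)+1)^2) := by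
    field_simp
    ring
  rw [key, neg_div]
  have hq : 0 < ((w*t)^2) / (2 * ((m:ℝ)+1)^2) := by positivity
  exact neg_lt_zero.mpr hq


end
end

section
/- For every real number a ≥ 3, one has (2/π) · ∫₀^{π/2} (1 + (a²−1)·sin²(ψ))^{−1/2} dψ < 3/4. More precisely, (2/π)·∫₀^{π/2} (1+(a²−1)sin²ψ)^{−1/2} dψ < (2/π)·(π/4 + (π/4)·(2/(a²+1))^{1/2}) < 3/4. -/
open MeasureTheory
open scoped Pointwise

noncomputable section

/-- For every `a ≥ 3`:
`(2/π) ∫₀^{π/2} (1+(a²−1)sin²ψ)^{−1/2} dψ < (2/π)(π/4 + (π/4)(2/(a²+1))^{1/2}) < 3/4`. -/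
theorem lambda_bound_dim_two (a : ℝ) (ha : 3 ≤ a) :
    2 / Real.pi * ∫ ψ in (0 : ℝ)..(Real.pi / 2),
        (1 + (a ^ 2 - 1) * Real.sin ψ ^ 2) ^ (-(1 / 2) : ℝ) <
      2 / Real.pi * (Real.pi / 4 + Real.pi / 4 * (2 / (a ^ 2 + 1)) ^ ((1 : ℝ) / 2)) ∧
    2 / Real.pi * (Real.pi / 4 + Real.pi / 4 * (2 / (a ^ 2 + 1)) ^ ((1 : ℝ) / 2)) <
      3 / 4 := by
  have hpi : (0:ℝ) < Real.pi := Real.pi_pos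
  have ha2 : (8:ℝ) ≤ a ^ 2 - 1 := by nlinarith
  set f : ℝ → ℝ := fun ψ => (1 + (a ^ 2 - 1) * Real.sin ψ ^ 2) ^ (-(1 / 2) : ℝ) with hf
  set c : ℝ := (2 / (a ^ 2 + 1)) ^ ((1 : ℝ) / 2) with hc
  have hbase : ∀ ψ : ℝ, (1:ℝ) ≤ 1 + (a ^ 2 - 1) * Real.sin ψ ^ 2 := fun ψ => by
    nlinarith [sq_nonneg (Real.sin ψ)]
  have hcontf : Continuous f := by
    apply Continuous.rpow_const
    · continuity
    · intro x; left; have := hbase x; positivity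
  have hfle1 : ∀ ψ : ℝ, f ψ ≤ 1 := fun ψ =>
    Real.rpow_le_one_of_one_le_of_nonpos (hbase ψ) (by norm_num)
  -- c equals ((a²+1)/2)^(-1/2)
  have hcalt : ((a ^ 2 + 1) / 2 : ℝ) ^ (-(1 / 2) : ℝ) = c := by
    rw [hc, Real.rpow_neg (by positivity), ← Real.inv_rpow (by positivity), inv_div]
  have hc_lt : c < 1 / 2 := by
    have h4 : ((1/4 : ℝ)) ^ ((1:ℝ)/2) = 1/2 := by
      rw [show (1/4:ℝ) = (1/2) ^ (2:ℕ) by norm_num, ← Real.rpow_natCast,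
        ← Real.rpow_mul (by norm_num)]
      norm_num
    have : (2 / (a ^ 2 + 1) : ℝ) < 1/4 := by
      rw [div_lt_div_iff₀ (by positivity) (by norm_num)]; nlinarith
    calc c < ((1/4 : ℝ)) ^ ((1:ℝ)/2) :=
          Real.rpow_lt_rpow (by positivity) this (by norm_num)
      _ = 1/2 := h4
  have hc_pos : 0 < c := by rw [hc]; positivity
  -- bound f on [π/4, π/2]
  have hfle2 : ∀ ψ ∈ Set.Icc (Real.pi/4) (Real.pi/2), f ψ ≤ c := by
    intro ψ hψ
    have hs : Real.sqrt 2 / 2 ≤ Real.sin ψ := by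
      rw [← Real.sin_pi_div_four]
      rcases eq_or_lt_of_le hψ.1 with h | h
      · rw [h]
      · exact (Real.strictMonoOn_sin ⟨by linarith [hψ.1, hpi], by linarith [hψ.2]⟩
          ⟨by linarith, hψ.2⟩ h).le
    have hs2 : (1:ℝ)/2 ≤ Real.sin ψ ^ 2 := by
      have h2 : Real.sqrt 2 ^ 2 = 2 := Real.sq_sqrt (by norm_num)
      have hs0 : (0:ℝ) ≤ Real.sqrt 2 / 2 := by positivity
      nlinarith
    have hb : (a ^ 2 + 1) / 2 ≤ 1 + (a ^ 2 - 1) * Real.sin ψ ^ 2 := by nlinarith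
    calc f ψ ≤ ((a ^ 2 + 1) / 2 : ℝ) ^ (-(1 / 2) : ℝ) :=
          Real.rpow_le_rpow_of_nonpos (by positivity) hb (by norm_num)
      _ = c := hcalt
  have hint1 : IntervalIntegrable f MeasureTheory.volume 0 (Real.pi/4) :=
    hcontf.intervalIntegrable _ _
  have hint2 : IntervalIntegrable f MeasureTheory.volume (Real.pi/4) (Real.pi/2) :=
    hcontf.intervalIntegrable _ _
  have hsplit : (∫ ψ in (0:ℝ)..(Real.pi/2), f ψ)
      = (∫ ψ in (0:ℝ)..(Real.pi/4), f ψ) + ∫ ψ in (Real.pi/4)..(Real.pi/2), f ψ :=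
    (intervalIntegral.integral_add_adjacent_intervals hint1 hint2).symm
  have h1 : (∫ ψ in (0:ℝ)..(Real.pi/4), f ψ) < Real.pi/4 := by
    have := intervalIntegral.integral_lt_integral_of_continuousOn_of_le_of_exists_lt
      (f := f) (g := fun _ => (1:ℝ)) (a := 0) (b := Real.pi/4) (by linarith)
      hcontf.continuousOn continuousOn_const
      (fun x _ => hfle1 x)
      ⟨Real.pi/4, Set.mem_Icc.2 ⟨by linarith, le_refl _⟩, by
        have hsin : Real.sin (Real.pi/4) = Real.sqrt 2 / 2 := Real.sin_pi_div_four
        have hs2 : Real.sin (Real.pi/4) ^ 2 = 1/2 := by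
          rw [hsin]; rw [div_pow, Real.sq_sqrt (by norm_num)]; norm_num
        have hb : (1:ℝ) < 1 + (a ^ 2 - 1) * Real.sin (Real.pi/4) ^ 2 := by
          rw [hs2]; nlinarith
        exact Real.rpow_lt_one_of_one_lt_of_neg hb (by norm_num)⟩
    simpa using this
  have h2 : (∫ ψ in (Real.pi/4)..(Real.pi/2), f ψ) ≤ Real.pi/4 * c := by
    have := intervalIntegral.integral_mono_on (μ := MeasureTheory.volume)
      (f := f) (g := fun _ => c) (by linarith) hint2
      (intervalIntegrable_const) hfle2
    rw [intervalIntegral.integral_const, smul_eq_mul] at this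
    calc _ ≤ (Real.pi/2 - Real.pi/4) * c := this
      _ = Real.pi/4 * c := by ring
  have hkey : (∫ ψ in (0:ℝ)..(Real.pi/2), f ψ) < Real.pi/4 + Real.pi/4 * c := by
    rw [hsplit]; linarith
  constructor
  · have h2pi : (0:ℝ) < 2 / Real.pi := by positivity
    exact mul_lt_mul_of_pos_left hkey h2pi
  · have heq : 2 / Real.pi * (Real.pi/4 + Real.pi/4 * c) = (1 + c)/2 := by
      field_simp; ring
    rw [heq]; linarith

end
end

section
/- Let n ≥ 3, let W_{n−2} = ∫₀^{π/2} cos^{n−2}(ψ) dψ, and for a > 0 define λ_a = (∫₀^{π/2} cos^{n−2}(ψ) · (1 + (a²−1)·sin²(ψ))^{−1/2} dψ) / W_{n−2}. Then for every a ≥ 4n·√n one has λ_a < 1 − 1/(a·√n). In particular, λ_a · W_{n−2} ≤ π/(2n) + (π/2) · n · (n² + a² − 1)^{−1/2} for all a > 0. -/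
open MeasureTheory
open scoped Pointwise

noncomputable section

namespace Stmt18

open Real

lemma base_pos {a : ℝ} (ha : 0 < a) (ψ : ℝ) : 0 < 1 + (a ^ 2 - 1) * Real.sin ψ ^ 2 := by
  have h1 : Real.sin ψ ^ 2 ≤ 1 := Real.sin_sq_le_one ψ
  have h0 : (0:ℝ) ≤ Real.sin ψ ^ 2 := sq_nonneg _
  rcases le_total a 1 with h | h
  · nlinarith [mul_nonneg (by nlinarith : (0:ℝ) ≤ 1 - a^2) (by linarith : (0:ℝ) ≤ 1 - Real.sin ψ ^ 2), pow_pos ha 2]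
  · nlinarith [mul_nonneg (by nlinarith : (0:ℝ) ≤ a^2 - 1) h0]

lemma rpow_neg_half (x : ℝ) (hx : 0 ≤ x) : x ^ (-(1/2) : ℝ) = (Real.sqrt x)⁻¹ := by
  rw [Real.rpow_neg hx, Real.sqrt_eq_rpow]

lemma integrand_cont {a : ℝ} (ha : 0 < a) (n : ℕ) :
    Continuous fun ψ : ℝ => Real.cos ψ ^ (n - 2) *
      (1 + (a ^ 2 - 1) * Real.sin ψ ^ 2) ^ (-(1 / 2) : ℝ) := by
  apply Continuous.mul (by fun_prop)
  apply Continuous.rpow_const (by fun_prop)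
  exact fun ψ => Or.inl (ne_of_gt (base_pos ha ψ))

lemma ptwise_le_one {n : ℕ} (hn : 3 ≤ n) {a : ℝ} (ha : 0 < a) {ψ : ℝ}
    (hψ : ψ ∈ Set.Icc 0 (Real.pi/2)) :
    Real.cos ψ ^ (n - 2) * (1 + (a ^ 2 - 1) * Real.sin ψ ^ 2) ^ (-(1 / 2) : ℝ) ≤ 1 := by
  have hc0 : 0 ≤ Real.cos ψ := Real.cos_nonneg_of_mem_Icc
    ⟨by linarith [hψ.1, Real.pi_pos], hψ.2⟩
  have hc1 : Real.cos ψ ≤ 1 := Real.cos_le_one ψ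
  have hB : Real.cos ψ ^ 2 ≤ 1 + (a ^ 2 - 1) * Real.sin ψ ^ 2 := by
    nlinarith [Real.sin_sq_add_cos_sq ψ, sq_nonneg (a * Real.sin ψ)]
  rcases eq_or_lt_of_le hc0 with h | h
  · have : Real.cos ψ ^ (n-2) = 0 := by
      rw [← h]; exact zero_pow (by omega)
    rw [this, zero_mul]; norm_num
  · have hppow : Real.cos ψ ^ (n-2) ≤ Real.cos ψ := by
      have := pow_le_pow_of_le_one hc0 hc1 (show 1 ≤ n - 2 by omega)
      simpa using this
    have hrp : (1 + (a ^ 2 - 1) * Real.sin ψ ^ 2) ^ (-(1 / 2) : ℝ) ≤ (Real.cos ψ)⁻¹ := by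
      rw [rpow_neg_half _ (base_pos ha ψ).le]
      have h1 : Real.cos ψ ≤ Real.sqrt (1 + (a ^ 2 - 1) * Real.sin ψ ^ 2) := by
        rw [show Real.cos ψ = Real.sqrt (Real.cos ψ ^ 2) from (Real.sqrt_sq hc0).symm]
        exact Real.sqrt_le_sqrt hB
      exact inv_anti₀ h (by simpa using h1)
    calc Real.cos ψ ^ (n-2) * (1 + (a ^ 2 - 1) * Real.sin ψ ^ 2) ^ (-(1 / 2) : ℝ)
        ≤ Real.cos ψ * (Real.cos ψ)⁻¹ := by
          apply mul_le_mul hppow hrp (Real.rpow_nonneg (base_pos ha ψ).le _) hc0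
      _ = 1 := mul_inv_cancel₀ (ne_of_gt h)

lemma rpow_base_le {a : ℝ} (ha : 0 < a) {ψ c : ℝ} (hcpos : 0 < Real.sin c)
    (hsin : Real.sin c ≤ Real.sin ψ) :
    (1 + (a ^ 2 - 1) * Real.sin ψ ^ 2) ^ (-(1/2) : ℝ) ≤ (a * Real.sin c)⁻¹ := by
  rw [rpow_neg_half _ (base_pos ha ψ).le]
  apply inv_anti₀ (by positivity)
  rw [show a * Real.sin c = Real.sqrt ((a * Real.sin c)^2) from
    (Real.sqrt_sq (by positivity)).symm]
  apply Real.sqrt_le_sqrt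
  have h1 : Real.sin ψ ^ 2 ≤ 1 := Real.sin_sq_le_one ψ
  nlinarith [mul_le_mul_of_nonneg_left
    (mul_self_le_mul_self hcpos.le hsin) (sq_nonneg a)]

lemma head_le {n : ℕ} (hn : 3 ≤ n) {a : ℝ} (ha : 0 < a) {c : ℝ} (hc0 : 0 ≤ c)
    (hc : c ≤ Real.pi/2) :
    (∫ ψ in (0:ℝ)..c, Real.cos ψ ^ (n - 2) *
      (1 + (a ^ 2 - 1) * Real.sin ψ ^ 2) ^ (-(1 / 2) : ℝ)) ≤ c := by
  calc (∫ ψ in (0:ℝ)..c, Real.cos ψ ^ (n - 2) *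
        (1 + (a ^ 2 - 1) * Real.sin ψ ^ 2) ^ (-(1 / 2) : ℝ))
      ≤ ∫ _ in (0:ℝ)..c, (1:ℝ) := by
        apply intervalIntegral.integral_mono_on hc0
          ((integrand_cont ha n).intervalIntegrable _ _)
          (Continuous.intervalIntegrable (by fun_prop) _ _)
        intro ψ hψ
        exact ptwise_le_one hn ha ⟨hψ.1, le_trans hψ.2 hc⟩
    _ = c := by simp

lemma W_pos {n : ℕ} (hn : 3 ≤ n) :
    0 < ∫ ψ in (0:ℝ)..(Real.pi/2), Real.cos ψ ^ (n-2) := by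
  apply intervalIntegral.intervalIntegral_pos_of_pos_on
    (Continuous.intervalIntegrable (by fun_prop) _ _)
  · intro x hx
    exact pow_pos (Real.cos_pos_of_mem_Ioo ⟨by linarith [hx.1, Real.pi_pos], hx.2⟩) _
  · positivity

lemma W_lb {n : ℕ} (hn : 3 ≤ n) :
    2 / (3 * Real.sqrt ((n:ℝ) - 2)) ≤ ∫ ψ in (0:ℝ)..(Real.pi/2), Real.cos ψ ^ (n-2) := by
  obtain ⟨m, rfl⟩ : ∃ m, n = m + 3 := ⟨n - 3, by omega⟩
  have hpi2 : (0:ℝ) ≤ Real.pi/2 := by positivity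
  have hstep1 : (∫ ψ in (0:ℝ)..(Real.pi/2), Real.cos ψ * (1 - Real.sin ψ ^ 2) ^ m)
      ≤ ∫ ψ in (0:ℝ)..(Real.pi/2), Real.cos ψ ^ (m + 3 - 2) := by
    apply intervalIntegral.integral_mono_on hpi2
      (Continuous.intervalIntegrable (by fun_prop) _ _)
      (Continuous.intervalIntegrable (by fun_prop) _ _)
    intro ψ hψ
    have hc0 : 0 ≤ Real.cos ψ := Real.cos_nonneg_of_mem_Icc
      ⟨by linarith [hψ.1, Real.pi_pos], hψ.2⟩
    have hc1 : Real.cos ψ ≤ 1 := Real.cos_le_one ψ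
    have h1 : (1 - Real.sin ψ ^ 2 : ℝ) = Real.cos ψ ^ 2 := (Real.cos_sq' ψ).symm
    rw [h1, show m + 3 - 2 = m + 1 by omega, ← pow_mul]
    calc Real.cos ψ * Real.cos ψ ^ (2 * m)
        ≤ Real.cos ψ * Real.cos ψ ^ m :=
          mul_le_mul_of_nonneg_left (pow_le_pow_of_le_one hc0 hc1 (by omega)) hc0
      _ = Real.cos ψ ^ (m + 1) := by ring
  have hsub : (∫ ψ in (0:ℝ)..(Real.pi/2), Real.cos ψ * (1 - Real.sin ψ ^ 2) ^ m)
      = ∫ t in (0:ℝ)..1, (1 - t ^ 2) ^ m := by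
    have h := intervalIntegral.integral_comp_smul_deriv
      (f := Real.sin) (f' := Real.cos) (g := fun t => (1 - t ^ 2) ^ m)
      (a := (0:ℝ)) (b := Real.pi/2)
      (fun x _ => Real.hasDerivAt_sin x) Real.continuous_cos.continuousOn (by fun_prop)
    simpa [Real.sin_pi_div_two, smul_eq_mul, Function.comp] using h
  set r : ℝ := (Real.sqrt ((m:ℝ) + 1))⁻¹ with hr_def
  have hsq : Real.sqrt ((m:ℝ)+1) ≥ 1 :=
    (Real.le_sqrt' one_pos).mpr (by nlinarith [show (0:ℝ) ≤ (m:ℝ) from Nat.cast_nonneg m])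
  have hrpos : 0 < r := by positivity
  have hrle1 : r ≤ 1 := by
    rw [hr_def]; exact inv_le_one_of_one_le₀ hsq
  have hr2 : r ^ 2 = ((m:ℝ) + 1)⁻¹ := by
    rw [hr_def, inv_pow, Real.sq_sqrt (by positivity)]
  have hsplit : (∫ t in (0:ℝ)..r, (1 - t^2)^m) + (∫ t in r..1, (1 - t^2)^m)
      = ∫ t in (0:ℝ)..1, (1 - t^2)^m :=
    intervalIntegral.integral_add_adjacent_intervals
      (Continuous.intervalIntegrable (by fun_prop) _ _)
      (Continuous.intervalIntegrable (by fun_prop) _ _)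
  have htail : 0 ≤ ∫ t in r..1, (1 - t^2)^m := by
    apply intervalIntegral.integral_nonneg hrle1
    intro t ht
    exact pow_nonneg (by nlinarith [ht.1, ht.2, hrpos]) m
  have hbern : (∫ t in (0:ℝ)..r, 1 - (m:ℝ) * t^2) ≤ ∫ t in (0:ℝ)..r, (1 - t^2)^m := by
    apply intervalIntegral.integral_mono_on hrpos.le
      (Continuous.intervalIntegrable (by fun_prop) _ _)
      (Continuous.intervalIntegrable (by fun_prop) _ _)
    intro t ht
    have h2 : (-2:ℝ) ≤ -(t^2) := by nlinarith [ht.1, ht.2, hrle1]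
    calc (1:ℝ) - (m:ℝ)*t^2 = 1 + (m:ℝ) * -(t^2) := by ring
      _ ≤ (1 + -(t^2))^m := one_add_mul_le_pow h2 m
      _ = (1 - t^2)^m := by ring_nf
  have hcomp : (∫ t in (0:ℝ)..r, 1 - (m:ℝ) * t^2) = r - (m:ℝ) * r^3 / 3 := by
    rw [intervalIntegral.integral_sub (intervalIntegrable_const)
      (Continuous.intervalIntegrable (by fun_prop) _ _)]
    simp only [intervalIntegral.integral_const_mul, integral_pow]
    simp; ring
  have hfin : 2 / (3 * Real.sqrt ((m:ℝ)+1)) ≤ r - (m:ℝ) * r^3 / 3 := by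
    have h1 : 2 / (3 * Real.sqrt ((m:ℝ)+1)) = 2/3 * r := by
      rw [hr_def]; field_simp
    rw [h1]
    have hmr : (m:ℝ) * r^2 ≤ 1 := by
      rw [hr2, mul_inv_le_iff₀ (by positivity)]
      linarith
    nlinarith [hrpos, hmr]
  have hcast : ((m + 3 : ℕ) : ℝ) - 2 = (m:ℝ) + 1 := by push_cast; ring
  rw [hcast]
  calc 2 / (3 * Real.sqrt ((m:ℝ)+1)) ≤ r - (m:ℝ) * r^3/3 := hfin
    _ = ∫ t in (0:ℝ)..r, 1 - (m:ℝ) * t^2 := hcomp.symm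
    _ ≤ ∫ t in (0:ℝ)..r, (1 - t^2)^m := hbern
    _ ≤ ∫ t in (0:ℝ)..1, (1 - t^2)^m := by linarith [htail, hsplit]
    _ = ∫ ψ in (0:ℝ)..(Real.pi/2), Real.cos ψ * (1 - Real.sin ψ ^ 2) ^ m := hsub.symm
    _ ≤ _ := hstep1


lemma le_of_sq_le' {x y : ℝ} (hx : 0 ≤ x) (hy : 0 ≤ y) (h : x^2 ≤ y^2) : x ≤ y := by
  nlinarith

lemma sqrt2_le : Real.sqrt 2 ≤ 141422/100000 := by
  apply le_of_sq_le' (Real.sqrt_nonneg 2) (by norm_num)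
  rw [Real.sq_sqrt (by norm_num : (0:ℝ) ≤ 2)]
  norm_num

lemma pi_div_sqrt8 : (109/100 : ℝ) ≤ Real.pi/(2*Real.sqrt 2) := by
  rw [le_div_iff₀ (by positivity)]
  have h := mul_le_mul_of_nonneg_left sqrt2_le (by norm_num : (0:ℝ) ≤ 109/50)
  nlinarith [Real.pi_gt_d6]

lemma quad_bound (x : ℝ) : 27/13*x - x^2 ≤ 109/100 := by
  nlinarith [sq_nonneg (x - 27/26)]

lemma caseA_r {nn a r : ℝ} (ha : 0 < a) (han : a ≤ nn) (hr : 0 ≤ r)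
    (h2 : r^2 = nn^2 + a^2 - 1) : r ≤ Real.sqrt 2 * nn := by
  have hnn : 0 < nn := lt_of_lt_of_le ha han
  apply le_of_sq_le' hr (by positivity)
  rw [mul_pow, Real.sq_sqrt (by norm_num : (0:ℝ) ≤ 2)]
  nlinarith [mul_self_le_mul_self ha.le han]

lemma caseB_r {nn a r : ℝ} (hnn : 0 < nn) (han : nn ≤ a) (hr : 0 ≤ r)
    (h2 : r^2 = nn^2 + a^2 - 1) : r ≤ 141422/100000 * a := by
  have ha : 0 < a := lt_of_lt_of_le hnn han
  apply le_of_sq_le' hr (by positivity)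
  nlinarith [mul_self_le_mul_self hnn.le han, sq_nonneg a]

lemma caseB_v {r s v a : ℝ} (hs : 0 < s) (hv : 0 ≤ v) (hv2 : v^2 = r)
    (hs2 : s^2 = a) (hra : r ≤ 141422/100000 * a) : v ≤ 6/5 * s := by
  apply le_of_sq_le' hv (by positivity)
  nlinarith [sq_nonneg s]

lemma caseB_num {v s : ℝ} (hv : 0 < v) (hs : 0 < s) (hva : v ≤ 6/5*s) :
    27 * v ≤ Real.pi * (13*s) := by
  nlinarith [Real.pi_gt_d6, hva, hs]

lemma AM_helper {v nn : ℝ} (hv : 0 < v) (hnn : 0 < nn) :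
    Real.pi/v ≤ Real.pi/(2*nn) + Real.pi/2*nn*(v^2)⁻¹ := by
  have hRHS : Real.pi/(2*nn) + Real.pi/2*nn*(v^2)⁻¹
      = (Real.pi*v^2 + Real.pi*nn^2)/(2*nn*v^2) := by
    field_simp
  rw [hRHS, div_le_div_iff₀ hv (by positivity)]
  nlinarith [mul_nonneg (mul_nonneg Real.pi_pos.le (sq_nonneg (v - nn))) hv.le]

set_option maxHeartbeats 1000000 in
lemma part1 (n : ℕ) (hn : 3 ≤ n) (a : ℝ) (ha : 4 * (n:ℝ) * Real.sqrt n ≤ a) :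
    (∫ ψ in (0:ℝ)..(Real.pi/2), Real.cos ψ ^ (n - 2) *
        (1 + (a ^ 2 - 1) * Real.sin ψ ^ 2) ^ (-(1 / 2) : ℝ))
      < (1 - 1/(a * Real.sqrt n)) * ∫ ψ in (0:ℝ)..(Real.pi/2), Real.cos ψ ^ (n-2) := by
  have hn3 : (3:ℝ) ≤ (n:ℝ) := by exact_mod_cast hn
  have hnpos : (0:ℝ) < (n:ℝ) := by linarith
  set W : ℝ := ∫ ψ in (0:ℝ)..(Real.pi/2), Real.cos ψ ^ (n-2) with hW
  have hWpos : 0 < W := by rw [hW]; exact W_pos hn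
  set p : ℝ := Real.sqrt n with hp_def
  have hp2 : p ^ 2 = (n:ℝ) := Real.sq_sqrt hnpos.le
  have hppos : 0 < p := Real.sqrt_pos.mpr hnpos
  have hp17 : (17/10:ℝ) ≤ p := by nlinarith [hp2, hppos]
  set q : ℝ := Real.sqrt ((n:ℝ) - 2) with hq_def
  have hq2 : q ^ 2 = (n:ℝ) - 2 := Real.sq_sqrt (by linarith)
  have hqpos : 0 < q := Real.sqrt_pos.mpr (by linarith)
  have hWlb : 2 / (3 * q) ≤ W := by rw [hW, hq_def]; exact W_lb hn
  have hapos : 0 < a := lt_of_lt_of_le (by positivity) ha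
  set ψ₁ : ℝ := 1 / (3 * p) with hψ₁def
  have hψ₁pos : 0 < ψ₁ := by positivity
  have hψ₁le : ψ₁ ≤ 1/5 := by
    rw [hψ₁def, div_le_div_iff₀ (by positivity) (by norm_num)]
    nlinarith
  have hψ₁pi : ψ₁ ≤ Real.pi/2 := by nlinarith [Real.pi_gt_d6]
  have hsin₁ : ψ₁/2 ≤ Real.sin ψ₁ := by
    have h := Real.sin_gt_sub_cube hψ₁pos
    have hsq : ψ₁^2 ≤ 1/25 := by nlinarith
    have hcube : ψ₁^3 ≤ ψ₁/25 := by nlinarith [mul_le_mul_of_nonneg_left hsq hψ₁pos.le]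
    linarith
  have hsin₁pos : 0 < Real.sin ψ₁ := by linarith
  set u : ℝ := 3/(2*(n:ℝ)) with hu_def
  have hun : u * (n:ℝ) = 3/2 := by rw [hu_def]; field_simp
  have hupos : 0 < u := by positivity
  have huhalf : u ≤ 1/2 := by
    rw [hu_def, div_le_div_iff₀ (by positivity) (by norm_num)]; linarith
  -- tail constant bound : (a * sin ψ₁)⁻¹ ≤ u
  have hK2 : (a * Real.sin ψ₁)⁻¹ ≤ u := by
    have h1 : (2*(n:ℝ)/3) ≤ a * Real.sin ψ₁ := by
      have h2 : a * (ψ₁/2) = a/(6*p) := by rw [hψ₁def]; ring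
      have h3 : (2*(n:ℝ)/3) ≤ a/(6*p) := by
        rw [le_div_iff₀ (by positivity)]
        nlinarith [ha, hp2, hppos]
      nlinarith [h3, h2, hapos, hsin₁]
    calc (a * Real.sin ψ₁)⁻¹ ≤ (2*(n:ℝ)/3)⁻¹ := inv_anti₀ (by positivity) h1
      _ = u := by rw [hu_def]; field_simp
  -- split integral
  have hint : ∀ c d : ℝ, IntervalIntegrable (fun ψ => Real.cos ψ ^ (n - 2) *
      (1 + (a ^ 2 - 1) * Real.sin ψ ^ 2) ^ (-(1 / 2) : ℝ)) volume c d :=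
    fun c d => (integrand_cont hapos n).intervalIntegrable c d
  have hsplit : (∫ ψ in (0:ℝ)..ψ₁, Real.cos ψ ^ (n - 2) *
        (1 + (a ^ 2 - 1) * Real.sin ψ ^ 2) ^ (-(1 / 2) : ℝ))
      + (∫ ψ in ψ₁..(Real.pi/2), Real.cos ψ ^ (n - 2) *
        (1 + (a ^ 2 - 1) * Real.sin ψ ^ 2) ^ (-(1 / 2) : ℝ))
      = ∫ ψ in (0:ℝ)..(Real.pi/2), Real.cos ψ ^ (n - 2) *
        (1 + (a ^ 2 - 1) * Real.sin ψ ^ 2) ^ (-(1 / 2) : ℝ) :=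
    intervalIntegral.integral_add_adjacent_intervals (hint _ _) (hint _ _)
  have hhead := head_le hn hapos hψ₁pos.le hψ₁pi
  -- tail bound
  have htail : (∫ ψ in ψ₁..(Real.pi/2), Real.cos ψ ^ (n - 2) *
        (1 + (a ^ 2 - 1) * Real.sin ψ ^ 2) ^ (-(1 / 2) : ℝ)) ≤ W * u := by
    have hstep : (∫ ψ in ψ₁..(Real.pi/2), Real.cos ψ ^ (n - 2) *
          (1 + (a ^ 2 - 1) * Real.sin ψ ^ 2) ^ (-(1 / 2) : ℝ))
        ≤ ∫ ψ in ψ₁..(Real.pi/2), Real.cos ψ ^ (n - 2) * (a * Real.sin ψ₁)⁻¹ := by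
      apply intervalIntegral.integral_mono_on hψ₁pi (hint _ _)
        (Continuous.intervalIntegrable (by fun_prop) _ _)
      intro ψ hψ
      have hc0 : 0 ≤ Real.cos ψ := Real.cos_nonneg_of_mem_Icc
        ⟨by linarith [hψ.1, Real.pi_pos], hψ.2⟩
      have hmono : Real.sin ψ₁ ≤ Real.sin ψ := by
        apply Real.strictMonoOn_sin.monotoneOn
          ⟨by linarith [Real.pi_pos], by linarith⟩
          ⟨by linarith [Real.pi_pos, hψ.1], hψ.2⟩ hψ.1
      exact mul_le_mul_of_nonneg_left (rpow_base_le hapos hsin₁pos hmono)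
        (pow_nonneg hc0 _)
    have hmul : (∫ ψ in ψ₁..(Real.pi/2), Real.cos ψ ^ (n - 2) * (a * Real.sin ψ₁)⁻¹)
        = (∫ ψ in ψ₁..(Real.pi/2), Real.cos ψ ^ (n - 2)) * (a * Real.sin ψ₁)⁻¹ :=
      intervalIntegral.integral_mul_const _ _
    have hWsplit : (∫ ψ in (0:ℝ)..ψ₁, Real.cos ψ ^ (n-2))
        + (∫ ψ in ψ₁..(Real.pi/2), Real.cos ψ ^ (n-2)) = W := by
      rw [hW]
      exact intervalIntegral.integral_add_adjacent_intervals
        (Continuous.intervalIntegrable (by fun_prop) _ _)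
        (Continuous.intervalIntegrable (by fun_prop) _ _)
    have hWhead : 0 ≤ ∫ ψ in (0:ℝ)..ψ₁, Real.cos ψ ^ (n-2) := by
      apply intervalIntegral.integral_nonneg hψ₁pos.le
      intro x hx
      exact pow_nonneg (Real.cos_nonneg_of_mem_Icc
        ⟨by linarith [hx.1, Real.pi_pos], by linarith [hx.2]⟩) _
    have hWt : (∫ ψ in ψ₁..(Real.pi/2), Real.cos ψ ^ (n-2)) ≤ W := by linarith
    have hWtnn : 0 ≤ ∫ ψ in ψ₁..(Real.pi/2), Real.cos ψ ^ (n-2) := by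
      apply intervalIntegral.integral_nonneg hψ₁pi
      intro x hx
      exact pow_nonneg (Real.cos_nonneg_of_mem_Icc
        ⟨by linarith [hx.1, Real.pi_pos], hx.2⟩) _
    calc (∫ ψ in ψ₁..(Real.pi/2), Real.cos ψ ^ (n - 2) *
          (1 + (a ^ 2 - 1) * Real.sin ψ ^ 2) ^ (-(1 / 2) : ℝ))
        ≤ (∫ ψ in ψ₁..(Real.pi/2), Real.cos ψ ^ (n - 2)) * (a * Real.sin ψ₁)⁻¹ := by
          rw [← hmul]; exact hstep
      _ ≤ W * u := by
          apply mul_le_mul hWt hK2 (by positivity) hWpos.le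
  -- key strict inequality
  have hqp2 : (q*p)^2 = ((n:ℝ)-2)*(n:ℝ) := by rw [mul_pow, hq2, hp2]
  have hy : (0:ℝ) < 35*(n:ℝ)/18 - 3 := by linarith
  have hqp : q * p < 35*(n:ℝ)/18 - 3 := by
    have hsq : (q*p)^2 < (35*(n:ℝ)/18-3)^2 := by
      nlinarith [hqp2, sq_nonneg ((n:ℝ)-2), hn3]
    nlinarith [hsq, hy, mul_nonneg hqpos.le hppos.le]
  have hq_cross : ψ₁ < (35/36 - u) * (2/(3*q)) := by
    have heq : (35/36 - u) * (2/(3*q)) = ((35/36 - u)*2)/(3*q) := by ring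
    rw [hψ₁def, heq, div_lt_div_iff₀ (by positivity) (by positivity)]
    nlinarith [hqp, hp2, hun, hppos, hn3, mul_pos hppos hppos]
  have hkey : ψ₁ < (35/36 - u) * W := by
    calc ψ₁ < (35/36 - u) * (2/(3*q)) := hq_cross
      _ ≤ (35/36 - u) * W := by
          apply mul_le_mul_of_nonneg_left hWlb (by linarith)
  -- conclude
  have h36 : (36:ℝ) ≤ a * p := by nlinarith [ha, hp2, hppos, hn3]
  have hinv36 : 1/(a*p) ≤ 1/36 := by
    apply div_le_div_of_nonneg_left (by norm_num) (by norm_num) h36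
  have hI : (∫ ψ in (0:ℝ)..(Real.pi/2), Real.cos ψ ^ (n - 2) *
      (1 + (a ^ 2 - 1) * Real.sin ψ ^ 2) ^ (-(1 / 2) : ℝ)) ≤ ψ₁ + W * u := by
    linarith [hsplit, hhead, htail]
  have hfin : ψ₁ + W * u < (1 - 1/(a*p)) * W := by
    nlinarith [hkey, mul_nonneg (by linarith : (0:ℝ) ≤ 1/36 - 1/(a*p)) hWpos.le]
  calc (∫ ψ in (0:ℝ)..(Real.pi/2), Real.cos ψ ^ (n - 2) *
      (1 + (a ^ 2 - 1) * Real.sin ψ ^ 2) ^ (-(1 / 2) : ℝ)) ≤ ψ₁ + W * u := hI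
    _ < (1 - 1/(a*p)) * W := hfin

set_option maxHeartbeats 1000000 in
lemma part2 (n : ℕ) (hn : 3 ≤ n) (a : ℝ) (ha : 0 < a) :
    (∫ ψ in (0:ℝ)..(Real.pi/2), Real.cos ψ ^ (n - 2) *
        (1 + (a ^ 2 - 1) * Real.sin ψ ^ 2) ^ (-(1 / 2) : ℝ))
      ≤ Real.pi / (2 * (n : ℝ)) +
        Real.pi / 2 * (n : ℝ) * ((n : ℝ) ^ 2 + a ^ 2 - 1) ^ (-(1 / 2) : ℝ) := by
  have hn3 : (3:ℝ) ≤ (n:ℝ) := by exact_mod_cast hn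
  have hnpos : (0:ℝ) < (n:ℝ) := by linarith
  set R : ℝ := (n:ℝ)^2 + a^2 - 1 with hR_def
  have hRpos : 0 < R := by nlinarith [sq_nonneg a]
  set r : ℝ := Real.sqrt R with hr_def
  have hrpos : 0 < r := Real.sqrt_pos.mpr hRpos
  have hr2 : r^2 = R := Real.sq_sqrt hRpos.le
  have hrw : R ^ (-(1/2):ℝ) = r⁻¹ := by
    rw [rpow_neg_half _ hRpos.le, hr_def]
  rw [hrw]
  have hI1 : (∫ ψ in (0:ℝ)..(Real.pi/2), Real.cos ψ ^ (n - 2) *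
      (1 + (a ^ 2 - 1) * Real.sin ψ ^ 2) ^ (-(1 / 2) : ℝ)) ≤ Real.pi/2 :=
    head_le hn ha (by positivity) le_rfl
  by_cases hcase : Real.pi/2 ≤ Real.pi/(2*(n:ℝ)) + Real.pi/2*(n:ℝ)*r⁻¹
  · linarith
  · push_neg at hcase
    have key := mul_lt_mul_of_pos_right hcase
      (show (0:ℝ) < 2*(n:ℝ)*r by positivity)
    have keyL : (Real.pi/(2*(n:ℝ)) + Real.pi/2*(n:ℝ)*r⁻¹) * (2*(n:ℝ)*r)
        = Real.pi * r + Real.pi * (n:ℝ)^2 := by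
      field_simp
    have keyR : (Real.pi/2) * (2*(n:ℝ)*r) = Real.pi * (n:ℝ) * r := by ring
    rw [keyL, keyR] at key
    have hstep : (n:ℝ)^2 < ((n:ℝ)-1) * r := by nlinarith [key, Real.pi_pos]
    have hr4 : ((n:ℝ)-1)^2 * ((n:ℝ)^2 + a^2 - 1) > (n:ℝ)^4 := by
      have h0 : (0:ℝ) ≤ (n:ℝ)^2 := sq_nonneg _
      have hprod := mul_lt_mul'' hstep hstep h0 h0
      have hgoal : ((n:ℝ)-1)^2 * (r^2) > (n:ℝ)^4 := by nlinarith [hprod]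
      rw [hr2, hR_def] at hgoal
      exact hgoal
    have ha2 : 49/4 < a^2 := by
      have hfac : (0:ℝ) ≤ ((n:ℝ)-3)*(8*(n:ℝ)^2-25*(n:ℝ)+15) :=
        mul_nonneg (by linarith) (by nlinarith [sq_nonneg ((n:ℝ)-3), hn3])
      have e1 : ((n:ℝ)-1)^2*a^2 > 2*(n:ℝ)^3 - 2*(n:ℝ) + 1 := by nlinarith [hr4]
      have e3 : 4*(((n:ℝ)-1)^2*a^2) > 49*((n:ℝ)-1)^2 := by nlinarith [e1, hfac]
      have hp1 : (0:ℝ) < ((n:ℝ)-1)^2 := by nlinarith [hn3]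
      nlinarith [e3, hp1]
    have ha72 : 7/2 ≤ a := by nlinarith [ha]
    set s : ℝ := Real.sqrt a with hs_def
    have hs2 : s^2 = a := Real.sq_sqrt ha.le
    have hspos : 0 < s := Real.sqrt_pos.mpr ha
    have hs187 : 187/100 ≤ s := by nlinarith [hs2, hspos, ha72]
    set ψ₀ : ℝ := s⁻¹ with hψ₀def
    have hψ₀pos : 0 < ψ₀ := by positivity
    have hψ₀le : ψ₀ ≤ 100/187 := by
      rw [hψ₀def, show (100/187 : ℝ) = (187/100)⁻¹ by norm_num]
      exact inv_anti₀ (by norm_num) hs187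
    have hψ₀pi : ψ₀ ≤ Real.pi/2 := by linarith [Real.pi_gt_d6]
    have hψ₀2 : ψ₀^2 = a⁻¹ := by rw [hψ₀def, ← hs2]; simp
    have hψ₀sq : ψ₀^2 ≤ 2/7 := by
      rw [hψ₀2, show (2/7 : ℝ) = (7/2)⁻¹ by norm_num]
      exact inv_anti₀ (by norm_num) ha72
    have hsin₀ : (13/14)*ψ₀ ≤ Real.sin ψ₀ := by
      have h := Real.sin_gt_sub_cube hψ₀pos
      have hcube : ψ₀^3 ≤ (2/7)*ψ₀ := by
        nlinarith [mul_le_mul_of_nonneg_left hψ₀sq hψ₀pos.le]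
      linarith
    have hsin₀pos : 0 < Real.sin ψ₀ := lt_of_lt_of_le (by positivity) hsin₀
    have hint : ∀ c d : ℝ, IntervalIntegrable (fun ψ => Real.cos ψ ^ (n - 2) *
        (1 + (a ^ 2 - 1) * Real.sin ψ ^ 2) ^ (-(1 / 2) : ℝ)) volume c d :=
      fun c d => (integrand_cont ha n).intervalIntegrable c d
    have hsplit : (∫ ψ in (0:ℝ)..ψ₀, Real.cos ψ ^ (n - 2) *
          (1 + (a ^ 2 - 1) * Real.sin ψ ^ 2) ^ (-(1 / 2) : ℝ))
        + (∫ ψ in ψ₀..(Real.pi/2), Real.cos ψ ^ (n - 2) *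
          (1 + (a ^ 2 - 1) * Real.sin ψ ^ 2) ^ (-(1 / 2) : ℝ))
        = ∫ ψ in (0:ℝ)..(Real.pi/2), Real.cos ψ ^ (n - 2) *
          (1 + (a ^ 2 - 1) * Real.sin ψ ^ 2) ^ (-(1 / 2) : ℝ) :=
      intervalIntegral.integral_add_adjacent_intervals (hint _ _) (hint _ _)
    have hhead := head_le hn ha hψ₀pos.le hψ₀pi
    have htail : (∫ ψ in ψ₀..(Real.pi/2), Real.cos ψ ^ (n - 2) *
          (1 + (a ^ 2 - 1) * Real.sin ψ ^ 2) ^ (-(1 / 2) : ℝ))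
        ≤ (1 - Real.sin ψ₀) * ((14/13)*ψ₀) := by
      have hstep2 : (∫ ψ in ψ₀..(Real.pi/2), Real.cos ψ ^ (n - 2) *
            (1 + (a ^ 2 - 1) * Real.sin ψ ^ 2) ^ (-(1 / 2) : ℝ))
          ≤ ∫ ψ in ψ₀..(Real.pi/2), Real.cos ψ * (a * Real.sin ψ₀)⁻¹ := by
        apply intervalIntegral.integral_mono_on hψ₀pi (hint _ _)
          (Continuous.intervalIntegrable (by fun_prop) _ _)
        intro ψ hψ
        have hc0 : 0 ≤ Real.cos ψ := Real.cos_nonneg_of_mem_Icc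
          ⟨by linarith [hψ.1, Real.pi_pos], hψ.2⟩
        have hc1 : Real.cos ψ ≤ 1 := Real.cos_le_one ψ
        have hmono : Real.sin ψ₀ ≤ Real.sin ψ := by
          apply Real.strictMonoOn_sin.monotoneOn
            ⟨by linarith [Real.pi_pos], by linarith⟩
            ⟨by linarith [Real.pi_pos, hψ.1], hψ.2⟩ hψ.1
        have hpow : Real.cos ψ ^ (n-2) ≤ Real.cos ψ := by
          have := pow_le_pow_of_le_one hc0 hc1 (show 1 ≤ n - 2 by omega)
          simpa using this
        exact mul_le_mul hpow (rpow_base_le ha hsin₀pos hmono)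
          (Real.rpow_nonneg (base_pos ha ψ).le _) hc0
      have hmul : (∫ ψ in ψ₀..(Real.pi/2), Real.cos ψ * (a * Real.sin ψ₀)⁻¹)
          = (∫ ψ in ψ₀..(Real.pi/2), Real.cos ψ) * (a * Real.sin ψ₀)⁻¹ :=
        intervalIntegral.integral_mul_const _ _
      have hcos : (∫ ψ in ψ₀..(Real.pi/2), Real.cos ψ) = 1 - Real.sin ψ₀ := by
        rw [integral_cos, Real.sin_pi_div_two]
      have hK : (a * Real.sin ψ₀)⁻¹ ≤ (14/13)*ψ₀ := by
        have haψ₀ : a * ψ₀ = s := by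
          rw [hψ₀def, ← hs2]; field_simp
        have h1 : (13/14)*s ≤ a * Real.sin ψ₀ := by
          calc (13/14)*s = a * ((13/14)*ψ₀) := by rw [← haψ₀]; ring
            _ ≤ a * Real.sin ψ₀ := by
                apply mul_le_mul_of_nonneg_left hsin₀ ha.le
        calc (a * Real.sin ψ₀)⁻¹ ≤ ((13/14)*s)⁻¹ := inv_anti₀ (by positivity) h1
          _ = (14/13) * s⁻¹ := by rw [mul_inv]; norm_num
          _ = (14/13)*ψ₀ := by rw [hψ₀def]
      calc (∫ ψ in ψ₀..(Real.pi/2), Real.cos ψ ^ (n - 2) *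
            (1 + (a ^ 2 - 1) * Real.sin ψ ^ 2) ^ (-(1 / 2) : ℝ))
          ≤ (∫ ψ in ψ₀..(Real.pi/2), Real.cos ψ) * (a * Real.sin ψ₀)⁻¹ := by
            rw [← hmul]; exact hstep2
        _ = (1 - Real.sin ψ₀) * (a * Real.sin ψ₀)⁻¹ := by rw [hcos]
        _ ≤ (1 - Real.sin ψ₀) * ((14/13)*ψ₀) := by
            apply mul_le_mul_of_nonneg_left hK
            linarith [Real.sin_le_one ψ₀]
    have hI2 : (∫ ψ in (0:ℝ)..(Real.pi/2), Real.cos ψ ^ (n - 2) *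
        (1 + (a ^ 2 - 1) * Real.sin ψ ^ 2) ^ (-(1 / 2) : ℝ))
        ≤ ψ₀ + (1 - Real.sin ψ₀) * ((14/13)*ψ₀) := by
      linarith [hsplit, hhead, htail]
    rcases le_total a (n:ℝ) with han | han
    · -- a ≤ n
      have hrle : r ≤ Real.sqrt 2 * (n:ℝ) :=
        caseA_r ha han hrpos.le (by rw [hr2, hR_def])
      have hrinv : (Real.sqrt 2 * (n:ℝ))⁻¹ ≤ r⁻¹ := inv_anti₀ hrpos hrle
      have hI3 : (∫ ψ in (0:ℝ)..(Real.pi/2), Real.cos ψ ^ (n - 2) *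
          (1 + (a ^ 2 - 1) * Real.sin ψ ^ 2) ^ (-(1 / 2) : ℝ))
          ≤ 27/13*ψ₀ - ψ₀^2 := by
        have e : (1 - Real.sin ψ₀) * ((14/13)*ψ₀) ≤ (1 - (13/14)*ψ₀) * ((14/13)*ψ₀) :=
          mul_le_mul_of_nonneg_right (by linarith) (by positivity)
        have e2 : (1 - (13/14)*ψ₀) * ((14/13)*ψ₀) = 14/13*ψ₀ - ψ₀^2 := by ring
        linarith [hI2, e, e2.le, e2.ge]
      have hmain : 27/13*ψ₀ - ψ₀^2 ≤ Real.pi/2*(n:ℝ)*r⁻¹ := by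
        have h1 : Real.pi/2*(n:ℝ)*(Real.sqrt 2*(n:ℝ))⁻¹ ≤ Real.pi/2*(n:ℝ)*r⁻¹ :=
          mul_le_mul_of_nonneg_left hrinv (by positivity)
        have h2 : Real.pi/2*(n:ℝ)*(Real.sqrt 2*(n:ℝ))⁻¹ = Real.pi/(2*Real.sqrt 2) := by
          field_simp
        have h3 := pi_div_sqrt8
        have h4 := quad_bound ψ₀
        linarith [h1, h2.le, h2.ge, h3, h4]
      have hpos2 : 0 < Real.pi/(2*(n:ℝ)) := by positivity
      linarith [hI3, hmain]
    · -- n ≤ a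
      set v : ℝ := Real.sqrt r with hv_def
      have hv2 : v^2 = r := Real.sq_sqrt hrpos.le
      have hvpos : 0 < v := Real.sqrt_pos.mpr hrpos
      have hra : r ≤ 141422/100000 * a :=
        caseB_r hnpos han hrpos.le (by rw [hr2, hR_def])
      have hva : v ≤ 6/5 * s := caseB_v hspos hvpos.le hv2 hs2 hra
      have hAM : Real.pi/v ≤ Real.pi/(2*(n:ℝ)) + Real.pi/2*(n:ℝ)*r⁻¹ := by
        have h := AM_helper hvpos hnpos
        rw [hv2] at h
        exact h
      have hI4 : (∫ ψ in (0:ℝ)..(Real.pi/2), Real.cos ψ ^ (n - 2) *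
          (1 + (a ^ 2 - 1) * Real.sin ψ ^ 2) ^ (-(1 / 2) : ℝ))
          ≤ 27/13*ψ₀ := by
        have e : (1 - Real.sin ψ₀) * ((14/13)*ψ₀) ≤ 1 * ((14/13)*ψ₀) :=
          mul_le_mul_of_nonneg_right (by linarith [hsin₀pos]) (by positivity)
        have e2 : (1:ℝ) * ((14/13)*ψ₀) = 14/13*ψ₀ := by ring
        linarith [hI2, e, e2.le, e2.ge]
      have hfin2 : 27/13*ψ₀ ≤ Real.pi/v := by
        have h1 : 27/13*ψ₀ = 27/(13*s) := by rw [hψ₀def]; field_simp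
        rw [h1, div_le_div_iff₀ (by positivity) hvpos]
        exact caseB_num hvpos hspos hva
      linarith [hI4, hfin2, hAM]

end Stmt18

/-- For `n ≥ 3`, `W_{n−2} = ∫₀^{π/2} cos^{n−2}ψ dψ` and
`λ_a = (∫₀^{π/2} cos^{n−2}ψ (1+(a²−1)sin²ψ)^{−1/2} dψ)/W_{n−2}`, one has
`λ_a < 1 − 1/(a√n)` for all `a ≥ 4n√n`; in particular
`λ_a W_{n−2} ≤ π/(2n) + (π/2) n (n²+a²−1)^{−1/2}` for all `a > 0`. -/
theorem lambda_bound_general (n : ℕ) (hn : 3 ≤ n)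
    (W : ℝ) (hW : W = ∫ ψ in (0 : ℝ)..(Real.pi / 2), Real.cos ψ ^ (n - 2))
    (lam : ℝ → ℝ)
    (hlam : ∀ a : ℝ, lam a =
      (∫ ψ in (0 : ℝ)..(Real.pi / 2),
        Real.cos ψ ^ (n - 2) * (1 + (a ^ 2 - 1) * Real.sin ψ ^ 2) ^ (-(1 / 2) : ℝ)) / W) :
    (∀ a : ℝ, 4 * (n : ℝ) * Real.sqrt n ≤ a → lam a < 1 - 1 / (a * Real.sqrt n)) ∧
    (∀ a : ℝ, 0 < a → lam a * W ≤ Real.pi / (2 * (n : ℝ)) +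
      Real.pi / 2 * (n : ℝ) * ((n : ℝ) ^ 2 + a ^ 2 - 1) ^ (-(1 / 2) : ℝ)) := by
  have hWpos : 0 < W := by rw [hW]; exact Stmt18.W_pos hn
  constructor
  · intro a ha
    rw [hlam a, div_lt_iff₀ hWpos, hW]
    exact Stmt18.part1 n hn a ha
  · intro a ha
    rw [hlam a, div_mul_cancel₀ _ (ne_of_gt hWpos)]
    exact Stmt18.part2 n hn a ha

end
end
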